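/- arXiv:2101.03817 — 3 statements merged into one kernel-verified Lean document; each statement's English description precedes it below -/
import Mathlib

section
/- The abelianization of the wreath product G ≀_X H is isomorphic to (⊕_{X/H} G^{ab}) × H^{ab}, where X/H is the set of H-orbits on X. -/
/-- The group of finitely supported functions `X → G` (pointwise multiplication). -/
def FinSupp (G X : Type*) [Group G] : Subgroup (X → G) where
  carrier := {φ | (Function.mulSupport φ).Finite}
  one_mem' := by simp [Function.mulSupport_one]
  mul_mem' := by
    intro a b ha hb
    exact ((ha.union hb).subset (Function.mulSupport_mul a b))
  inv_mem' := by
    intro a ha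
    simpa [Function.mulSupport_inv] using ha

/-- The automorphism of `FinSupp G X` given by `h : H`, `(h.φ)(x) = φ(h⁻¹ • x)`. -/
def wreathAut (G H X : Type*) [Group G] [Group H] [MulAction H X] (h : H) :
    FinSupp G X ≃* FinSupp G X where
  toFun φ := ⟨fun x => φ.1 (h⁻¹ • x), by
    have hsub : Function.mulSupport (fun x => φ.1 (h⁻¹ • x)) ⊆
        (fun x => h⁻¹ • x) ⁻¹' Function.mulSupport φ.1 := fun x hx => hx
    exact (φ.2.preimage ((MulAction.injective (h⁻¹ : H)).injOn)).subset hsub⟩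
  invFun φ := ⟨fun x => φ.1 (h • x), by
    have hsub : Function.mulSupport (fun x => φ.1 (h • x)) ⊆
        (fun x => h • x) ⁻¹' Function.mulSupport φ.1 := fun x hx => hx
    exact (φ.2.preimage ((MulAction.injective h).injOn)).subset hsub⟩
  left_inv φ := by ext x; simp
  right_inv φ := by ext x; simp
  map_mul' φ ψ := rfl

/-- The action of `H` on `FinSupp G X` by automorphisms. -/
def wreathAction (G H X : Type*) [Group G] [Group H] [MulAction H X] :
    H →* MulAut (FinSupp G X) where
  toFun := wreathAut G H X
  map_one' := by
    ext φ x
    simp [wreathAut]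
  map_mul' a b := by
    ext φ x
    simp [wreathAut, mul_smul]

/-- The restricted wreath product `G ≀_X H`. -/
abbrev Wreath (G H X : Type*) [Group G] [Group H] [MulAction H X] :=
  FinSupp G X ⋊[wreathAction G H X] H

open scoped Classical in
/-- The function `δ_x^s` sending `x` to `s` and everything else to `1`. -/
noncomputable def deltaFn {G X : Type*} [Group G] (x : X) (s : G) : FinSupp G X :=
  ⟨fun y => if y = x then s else 1, (Set.finite_singleton x).subset (by
    intro y hy
    simp only [Function.mem_mulSupport] at hy
    by_contra hxy
    simp only [Set.mem_singleton_iff] at hxy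
    simp [hxy] at hy)⟩


section Aux
open Function
open scoped Classical

variable {G X : Type*} [Group G]

@[simp] lemma deltaFn_apply (x y : X) (s : G) :
    (deltaFn x s).1 y = if y = x then s else 1 := rfl

@[simp] lemma FinSupp.mul_apply (a b : FinSupp G X) (y : X) : (a * b).1 y = a.1 y * b.1 y := rfl
@[simp] lemma FinSupp.one_apply (y : X) : (1 : FinSupp G X).1 y = 1 := rfl

/-- `deltaFn` as a monoid hom in the value. -/
noncomputable def deltaHom (x : X) : G →* FinSupp G X where
  toFun s := deltaFn x s
  map_one' := by
    refine Subtype.ext (funext fun y => ?_)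
    simp [deltaFn]
  map_mul' s t := by
    refine Subtype.ext (funext fun y => ?_)
    by_cases h : y = x <;> simp [deltaFn, h]

lemma closure_deltaFn :
    Subgroup.closure {φ : FinSupp G X | ∃ x s, φ = deltaFn x s} = ⊤ := by
  rw [eq_top_iff]
  rintro φ -
  suffices H : ∀ (S : Finset X) (φ : FinSupp G X), Function.mulSupport φ.1 ⊆ S →
      φ ∈ Subgroup.closure {φ : FinSupp G X | ∃ x s, φ = deltaFn x s} by
    exact H φ.2.toFinset φ (Set.Finite.coe_toFinset _).ge
  intro S
  induction S using Finset.induction_on with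
  | empty =>
    intro φ hφ
    have : φ = 1 := by
      refine Subtype.ext (funext fun y => ?_)
      by_contra hy
      exact absurd (hφ hy) (by simp)
    rw [this]; exact one_mem _
  | insert x S hx ih =>
    intro φ hφ
    set φ' : FinSupp G X := ⟨fun y => if y = x then 1 else φ.1 y, by
      refine φ.2.subset fun y hy => ?_
      simp only [Function.mem_mulSupport] at hy ⊢
      intro h1
      exact hy (by simp [h1])⟩ with hφ'
    have hdec : φ = deltaFn x (φ.1 x) * φ' := by
      refine Subtype.ext (funext fun y => ?_)
      by_cases h : y = x <;> simp [h, φ']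
    rw [hdec]
    refine mul_mem (Subgroup.subset_closure ⟨x, φ.1 x, rfl⟩) (ih φ' ?_)
    intro y hy
    simp only [Function.mem_mulSupport, φ'] at hy
    by_cases h : y = x
    · simp [h] at hy
    · have := hφ (show y ∈ Function.mulSupport φ.1 by simpa [h] using hy)
      simpa [h] using this

end Aux

section Wreath
open Function SemidirectProduct
open scoped Classical

variable {G H X : Type*} [Group G] [Group H] [MulAction H X]

local notation "Q" => Quotient (MulAction.orbitRel H X)
local notation "π" => Quotient.mk (MulAction.orbitRel H X)

lemma pi_smul (h : H) (x : X) : π (h • x) = π x :=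
  Quotient.sound ⟨h, rfl⟩

/-- shift within fibers of the orbit map -/
def orbitFiberEquiv (h : H) (ω : Q) : {x : X // π x = ω} ≃ {x : X // π x = ω} where
  toFun y := ⟨h⁻¹ • y.1, (pi_smul h⁻¹ y.1).trans y.2⟩
  invFun y := ⟨h • y.1, (pi_smul h y.1).trans y.2⟩
  left_inv y := Subtype.ext (by simp)
  right_inv y := Subtype.ext (by simp)

/-- collapse a finitely supported function along orbits -/
noncomputable def pFun (φ : FinSupp G X) : Q → Abelianization G :=
  fun ω => ∏ᶠ (y : {x : X // π x = ω}), Abelianization.of (φ.1 y.1)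

lemma pFun_support_finite (φ : FinSupp G X) (ω : Q) :
    (mulSupport fun y : {x : X // π x = ω} => Abelianization.of (φ.1 y.1)).Finite := by
  refine (φ.2.preimage (Subtype.val_injective.injOn)).subset ?_
  intro y hy
  simp only [mem_mulSupport] at hy ⊢
  intro h1
  exact hy (by rw [h1, map_one])

lemma pFun_finite (φ : FinSupp G X) : (mulSupport (pFun (H := H) φ)).Finite := by
  refine (φ.2.image π).subset ?_
  intro ω hω
  simp only [mem_mulSupport, pFun] at hω
  by_contra hmem
  refine hω (finprod_eq_one_of_forall_eq_one fun y => ?_)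
  have : φ.1 y.1 = 1 := by
    by_contra hne
    exact hmem ⟨y.1, hne, y.2⟩
  rw [this, map_one]

noncomputable def pHom : FinSupp G X →* FinSupp (Abelianization G) Q where
  toFun φ := ⟨pFun φ, pFun_finite φ⟩
  map_one' := by
    refine Subtype.ext (funext fun ω => ?_)
    exact finprod_eq_one_of_forall_eq_one fun y => by simp
  map_mul' φ ψ := by
    refine Subtype.ext (funext fun ω => ?_)
    show pFun (φ * ψ) ω = pFun φ ω * pFun ψ ω
    unfold pFun
    have : (fun y : {x : X // π x = ω} => Abelianization.of ((φ * ψ).1 y.1)) =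
        fun y => Abelianization.of (φ.1 y.1) * Abelianization.of (ψ.1 y.1) := by
      funext y; rw [FinSupp.mul_apply, map_mul]
    rw [this]
    exact finprod_mul_distrib (pFun_support_finite φ ω) (pFun_support_finite ψ ω)

lemma pHom_invariant (h : H) (φ : FinSupp G X) :
    (pHom ((wreathAction G H X h) φ) : FinSupp (Abelianization G) Q) = pHom φ := by
  refine Subtype.ext (funext fun ω => ?_)
  show pFun (wreathAction G H X h φ) ω = pFun φ ω
  unfold pFun
  exact finprod_comp_equiv (orbitFiberEquiv h ω)
    (f := fun y : {x : X // π x = ω} => Abelianization.of (φ.1 y.1))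

lemma pHom_delta (x : X) (s : G) :
    (pHom (deltaFn x s) : FinSupp (Abelianization G) Q) = deltaFn (π x) (Abelianization.of s) := by
  refine Subtype.ext (funext fun ω => ?_)
  show pFun (deltaFn x s) ω = _
  rw [deltaFn_apply]
  unfold pFun
  by_cases hω : ω = π x
  · subst hω
    rw [if_pos rfl]
    refine finprod_eq_single _ ⟨x, rfl⟩ (fun y hy => ?_) |>.trans (by simp)
    have : y.1 ≠ x := fun hyx => hy (Subtype.ext hyx)
    simp [this]
  · rw [if_neg hω]
    refine finprod_eq_one_of_forall_eq_one fun y => ?_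
    have : y.1 ≠ x := fun hyx => hω (y.2 ▸ hyx ▸ rfl)
    simp [this]

end Wreath
section Wreath2
open Function SemidirectProduct
open scoped Classical

variable {G H X : Type*} [Group G] [Group H] [MulAction H X]

local notation "Q" => Quotient (MulAction.orbitRel H X)
local notation "π" => Quotient.mk (MulAction.orbitRel H X)
local notation "A" => FinSupp (Abelianization G) (Quotient (MulAction.orbitRel H X))

/-- `s ↦ of (inl (δ_x^s))` -/
noncomputable def kHom (x : X) : G →* Abelianization (Wreath G H X) :=
  Abelianization.of.comp ((inl : FinSupp G X →* Wreath G H X).comp (deltaHom x))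

lemma kHom_apply (x : X) (s : G) :
    kHom (H := H) x s = Abelianization.of (inl (deltaFn x s)) := rfl

lemma kHom_smul (h : H) (x : X) : kHom (G := G) (H := H) (h • x) = kHom x := by
  refine MonoidHom.ext fun s => ?_
  have hd : deltaFn (h • x) s = wreathAction G H X h (deltaFn x s) := by
    refine Subtype.ext (funext fun y => ?_)
    show (if y = h • x then s else 1) = (if h⁻¹ • y = x then s else 1)
    simp [inv_smul_eq_iff]
  rw [kHom_apply, kHom_apply, hd, inl_aut]
  rw [map_mul, map_mul, map_inv, map_inv, mul_comm, inv_mul_cancel_left]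

lemma kHom_orbit (x y : X) (hxy : π x = π y) : kHom (G := G) (H := H) x = kHom y := by
  obtain ⟨h, hh⟩ := Quotient.exact hxy
  rw [← hh, kHom_smul]

lemma qA_support_finite (ψ : A) :
    (mulSupport fun ω => Abelianization.lift (kHom (G := G) (H := H) (Quotient.out ω)) (ψ.1 ω)).Finite := by
  refine ψ.2.subset fun ω hω => ?_
  simp only [mem_mulSupport] at hω ⊢
  intro h1
  exact hω (by rw [h1, map_one])

/-- The reverse map on the `⊕ G^ab` factor. -/
noncomputable def qA : A →* Abelianization (Wreath G H X) where
  toFun ψ := ∏ᶠ ω, Abelianization.lift (kHom (Quotient.out ω)) (ψ.1 ω)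
  map_one' := finprod_eq_one_of_forall_eq_one fun ω => by simp
  map_mul' ψ χ := by
    have : (fun ω => Abelianization.lift (kHom (G := G) (H := H) (Quotient.out ω)) ((ψ * χ).1 ω)) =
        fun ω => Abelianization.lift (kHom (Quotient.out ω)) (ψ.1 ω) *
          Abelianization.lift (kHom (Quotient.out ω)) (χ.1 ω) := by
      funext ω; rw [FinSupp.mul_apply, map_mul]
    show ∏ᶠ ω, Abelianization.lift (kHom (Quotient.out ω)) ((ψ * χ).1 ω) = _
    rw [this]
    exact finprod_mul_distrib (qA_support_finite ψ) (qA_support_finite χ)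

lemma qA_delta (ω : Q) (a : Abelianization G) :
    qA (deltaFn ω a) = Abelianization.lift (kHom (G := G) (H := H) (Quotient.out ω)) a := by
  show (∏ᶠ ω', Abelianization.lift (kHom (Quotient.out ω')) ((deltaFn ω a).1 ω')) = _
  refine (finprod_eq_single _ ω fun ω' hω' => ?_).trans (by simp)
  rw [deltaFn_apply, if_neg hω', map_one]

/-- The reverse map on the `H^ab` factor. -/
noncomputable def qB : Abelianization H →* Abelianization (Wreath G H X) :=
  Abelianization.lift (Abelianization.of.comp (inr : H →* Wreath G H X))

/-- The forward map. -/
noncomputable def Fhom : Wreath G H X →* A × Abelianization H :=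
  SemidirectProduct.lift ((MonoidHom.inl _ _).comp pHom)
    ((MonoidHom.inr _ _).comp Abelianization.of)
    (fun h => by
      refine MonoidHom.ext fun φ => ?_
      show (MonoidHom.inl _ _) (pHom ((wreathAction G H X h) φ)) =
        (MulAut.conj (((MonoidHom.inr A (Abelianization H)).comp Abelianization.of) h))
          ((MonoidHom.inl _ _) (pHom φ))
      rw [pHom_invariant, MulAut.conj_apply, mul_comm, inv_mul_cancel_left])

lemma Fhom_inl (n : FinSupp G X) :
    Fhom (inl n : Wreath G H X) = ((pHom n : A), 1) := by
  unfold Fhom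
  rw [SemidirectProduct.lift_inl]
  rfl

lemma Fhom_inr (h : H) :
    Fhom (inr h : Wreath G H X) = ((1 : A), Abelianization.of h) := by
  unfold Fhom
  rw [SemidirectProduct.lift_inr]
  rfl

noncomputable def Fbar : Abelianization (Wreath G H X) →* A × Abelianization H :=
  Abelianization.lift Fhom

lemma Fbar_of (w : Wreath G H X) : Fbar (Abelianization.of w) = Fhom w := rfl

lemma qA_comp_pHom :
    (qA.comp pHom : FinSupp G X →* Abelianization (Wreath G H X)) =
      Abelianization.of.comp (inl : FinSupp G X →* Wreath G H X) := by
  refine MonoidHom.eq_of_eqOn_dense closure_deltaFn ?_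
  rintro _ ⟨x, s, rfl⟩
  show qA (pHom (deltaFn x s)) = Abelianization.of (inl (deltaFn x s))
  rw [pHom_delta, qA_delta, Abelianization.lift_apply_of,
    kHom_orbit (Quotient.out (π x)) x (by rw [Quotient.out_eq]), kHom_apply]

lemma Fbar_comp_kbar (x : X) :
    Fbar.comp (Abelianization.lift (kHom (G := G) (H := H) x)) =
      (MonoidHom.inl A (Abelianization H)).comp (deltaHom (π x)) := by
  refine Abelianization.hom_ext _ _ (MonoidHom.ext fun s => ?_)
  show Fbar (Abelianization.lift (kHom x) (Abelianization.of s)) = _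
  rw [Abelianization.lift_apply_of, kHom_apply, Fbar_of, Fhom_inl, pHom_delta]
  rfl

lemma Fbar_comp_qA :
    (Fbar.comp qA : A →* A × Abelianization H) = MonoidHom.inl A (Abelianization H) := by
  refine MonoidHom.eq_of_eqOn_dense closure_deltaFn ?_
  rintro _ ⟨ω, a, rfl⟩
  show Fbar (qA (deltaFn ω a)) = MonoidHom.inl A (Abelianization H) (deltaFn ω a)
  rw [qA_delta]
  have := DFunLike.congr_fun (Fbar_comp_kbar (G := G) (H := H) (Quotient.out ω)) a
  simp only [MonoidHom.comp_apply] at this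
  rw [this]
  show (MonoidHom.inl A (Abelianization H)) (deltaFn (π (Quotient.out ω)) a) = _
  rw [Quotient.out_eq]

lemma Fbar_comp_qB :
    (Fbar.comp qB : Abelianization H →* A × Abelianization H) =
      MonoidHom.inr A (Abelianization H) := by
  refine Abelianization.hom_ext _ _ (MonoidHom.ext fun h => ?_)
  show Fbar (qB (Abelianization.of h)) = MonoidHom.inr A (Abelianization H) (Abelianization.of h)
  rw [qB, Abelianization.lift_apply_of]
  show Fbar (Abelianization.of (inr h)) = _
  rw [Fbar_of, Fhom_inr]
  rfl

theorem wreath_abelianization_aux (G H X : Type*) [Group G] [Group H] [MulAction H X] :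
    Nonempty (Abelianization (Wreath G H X) ≃*
      (FinSupp (Abelianization G) (Quotient (MulAction.orbitRel H X))) × Abelianization H) := by
  refine ⟨MonoidHom.toMulEquiv Fbar (qA.coprod qB) ?_ ?_⟩
  · -- (qA.coprod qB).comp Fbar = id
    refine Abelianization.hom_ext _ _ (SemidirectProduct.hom_ext ?_ ?_)
    · refine MonoidHom.ext fun n => ?_
      show (qA.coprod qB) (Fbar (Abelianization.of (inl n))) = Abelianization.of (inl n)
      rw [Fbar_of, Fhom_inl, MonoidHom.coprod_apply]
      simp only [map_one, mul_one]
      exact DFunLike.congr_fun (qA_comp_pHom (G := G) (H := H) (X := X)) n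
    · refine MonoidHom.ext fun h => ?_
      show (qA.coprod qB) (Fbar (Abelianization.of (inr h))) = Abelianization.of (inr h)
      rw [Fbar_of, Fhom_inr, MonoidHom.coprod_apply]
      simp only [map_one, one_mul]
      rw [qB, Abelianization.lift_apply_of]
      rfl
  · -- Fbar.comp (qA.coprod qB) = id
    rw [MonoidHom.comp_coprod, Fbar_comp_qA, Fbar_comp_qB, MonoidHom.coprod_inl_inr]

end Wreath2

/-- The abelianization of `G ≀_X H` is isomorphic to `(⊕_{X/H} G^{ab}) × H^{ab}`. -/
theorem stmt4 (G H X : Type*) [Group G] [Group H] [MulAction H X] :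
    Nonempty (Abelianization (Wreath G H X) ≃*
      (FinSupp (Abelianization G) (Quotient (MulAction.orbitRel H X))) × Abelianization H) := by
  exact wreath_abelianization_aux G H X
end

section
/- Let G be a finitely generated group and H a quotient of G. If every Schreier graph of G (with respect to some fixed finite symmetric generating set) has at most one end, then every Schreier graph of H has at most one end. In other words, property FW passes to quotients of finitely generated groups. -/
open scoped Classical in
/-- The number of ends of a graph: the supremum over finite vertex sets `K` of the
number of infinite connected components of the induced subgraph on the complement of `K`. -/
noncomputable def numEnds {V : Type*} (Γ : SimpleGraph V) : ℕ∞ :=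
  ⨆ K : Finset V,
    {C : (SimpleGraph.induce ((↑K : Set V)ᶜ) Γ).ConnectedComponent | C.supp.Infinite}.encard

/-- The orbital graph of an action of `G` on `X` with respect to `S ⊆ G`:
vertices `X`, an edge between `x` and `s • x` for each `s ∈ S`. -/
def orbitalGraph (G : Type*) [Group G] (S : Set G) (X : Type*) [MulAction G X] :
    SimpleGraph X where
  Adj x y := x ≠ y ∧ ∃ s ∈ S, (s • x = y ∨ s • y = x)
  symm := by
    refine ⟨?_⟩
    rintro x y ⟨h, s, hs, h'⟩
    exact ⟨h.symm, s, hs, h'.symm⟩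
  loopless := by refine ⟨?_⟩; rintro x ⟨h, -⟩; exact h rfl

/-- The Schreier graph `Sch(G, H; S)`: vertices the left cosets `G ⧸ H`,
an edge between `gH` and `sgH` for each `s ∈ S`. -/
def schreierGraph (G : Type*) [Group G] (S : Set G) (H : Subgroup G) :
    SimpleGraph (G ⧸ H) where
  Adj x y := x ≠ y ∧ ∃ s ∈ S, ∃ g : G,
      (((g : G ⧸ H) = x ∧ ((s * g : G) : G ⧸ H) = y)) ∨
      (((g : G ⧸ H) = y ∧ ((s * g : G) : G ⧸ H) = x))
  symm := by
    refine ⟨?_⟩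
    rintro x y ⟨h, s, hs, g, hg⟩
    exact ⟨h.symm, s, hs, g, hg.symm⟩
  loopless := by refine ⟨?_⟩; rintro x ⟨h, -⟩; exact h rfl

/-- The Cayley graph of `G` with respect to `S`. -/
def cayleyGraph (G : Type*) [Group G] (S : Set G) : SimpleGraph G :=
  orbitalGraph G S G

/-- `S` is a finite symmetric generating set of `G`. -/
def IsSymmGen {G : Type*} [Group G] (S : Finset G) : Prop :=
  (∀ s ∈ S, s⁻¹ ∈ S) ∧ Subgroup.closure (S : Set G) = ⊤

/-- A group has property FW if all of its Schreier graphs with respect to a finite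
symmetric generating set have at most one end. -/
def HasFW (G : Type*) [Group G] : Prop :=
  ∀ S : Finset G, IsSymmGen S → ∀ L : Subgroup G, numEnds (schreierGraph G (↑S) L) ≤ 1

open SimpleGraph
open scoped Pointwise

namespace FWAux

/-! ### Generic graph lemmas -/

lemma supp_infinite_map {V V' : Type*} {Γ : SimpleGraph V} {Γ' : SimpleGraph V'}
    (e : Γ ≃g Γ') {C : Γ.ConnectedComponent} (hC : C.supp.Infinite) :
    (C.map e.toHom).supp.Infinite := by
  have hsub : (⇑e) '' C.supp ⊆ (C.map e.toHom).supp := by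
    rintro _ ⟨v, hv, rfl⟩
    rw [ConnectedComponent.mem_supp_iff] at hv ⊢
    rw [← hv]
    rfl
  exact (hC.image (Set.injOn_of_injective e.toEquiv.injective)).mono hsub

lemma numEnds_le_of_iso {V V' : Type*} {Γ : SimpleGraph V} {Γ' : SimpleGraph V'}
    (e : Γ ≃g Γ') : numEnds Γ' ≤ numEnds Γ := by
  classical
  rw [show numEnds Γ' = ⨆ K : Finset V',
    {C : (SimpleGraph.induce ((↑K : Set V')ᶜ) Γ').ConnectedComponent |
      C.supp.Infinite}.encard from rfl,
     show numEnds Γ = ⨆ K : Finset V,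
    {C : (SimpleGraph.induce ((↑K : Set V)ᶜ) Γ).ConnectedComponent |
      C.supp.Infinite}.encard from rfl]
  refine iSup_le fun K => ?_
  set K₀ : Finset V := K.image e.symm with hK₀
  have hmem : ∀ x : V', x ∈ ((↑K : Set V'))ᶜ ↔ (e.symm x : V) ∈ ((↑K₀ : Set V))ᶜ := by
    intro x
    simp only [Set.mem_compl_iff, Finset.coe_image, Finset.mem_coe, hK₀, Finset.mem_image]
    constructor
    · rintro hx ⟨k, hk, hke⟩
      exact hx (by rwa [e.symm.toEquiv.injective.eq_iff.mp hke] at hk)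
    · intro hx hxK
      exact hx ⟨x, hxK, rfl⟩
  let ε : (induce ((↑K : Set V'))ᶜ Γ') ≃g (induce ((↑K₀ : Set V))ᶜ Γ) :=
    { toEquiv := (e.symm.toEquiv).subtypeEquiv hmem
      map_rel_iff' := by
        intro a b
        exact e.symm.map_adj_iff }
  refine le_trans ?_ (le_iSup _ K₀)
  rw [← Set.InjOn.encard_image
    (Set.injOn_of_injective ε.connectedComponentEquiv.injective)
    (s := {C : (induce ((↑K : Set V'))ᶜ Γ').ConnectedComponent | C.supp.Infinite})]
  refine Set.encard_le_encard ?_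
  rintro _ ⟨C, hC, rfl⟩
  exact supp_infinite_map ε hC

lemma reachable_induce_of_walk {V : Type*} {Γ : SimpleGraph V} {s : Set V} :
    ∀ {a b : V} (p : Γ.Walk a b), (∀ v ∈ p.support, v ∈ s) →
    ∀ (ha : a ∈ s) (hb : b ∈ s),
    (SimpleGraph.induce s Γ).Reachable ⟨a, ha⟩ ⟨b, hb⟩ := by
  intro a b p
  induction p with
  | nil => intro _ ha hb; rfl
  | @cons a c b h q ih =>
    intro hsupp ha hb
    have hc : c ∈ s := hsupp c (by simp)
    have hadj : (SimpleGraph.induce s Γ).Adj ⟨a, ha⟩ ⟨c, hc⟩ := h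
    exact hadj.reachable.trans (ih (fun v hv => hsupp v (by simp [hv])) hc hb)

lemma exists_boundary {V : Type*} {Γ : SimpleGraph V} {K' : Set V} :
    ∀ {a k : V} (p : Γ.Walk a k) (ha : a ∉ K'), k ∈ K' →
      ∃ b, ∃ hb : b ∉ K', (∃ k' ∈ K', Γ.Adj b k') ∧
        (SimpleGraph.induce K'ᶜ Γ).Reachable ⟨a, ha⟩ ⟨b, hb⟩ := by
  intro a k p
  induction p with
  | nil => intro ha hk; exact absurd hk ha
  | @cons a c k h q ih =>
    intro ha hk
    by_cases hc : c ∈ K'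
    · exact ⟨a, ha, ⟨c, hc, h⟩, Reachable.refl _⟩
    · obtain ⟨b, hb, hadj, hreach⟩ := ih hc hk
      have hadj' : (SimpleGraph.induce K'ᶜ Γ).Adj ⟨a, ha⟩ ⟨c, hc⟩ := h
      exact ⟨b, hb, hadj, hadj'.reachable.trans hreach⟩

lemma components_finite {V : Type*} {Γ : SimpleGraph V} (hconn : Γ.Preconnected)
    (hlf : ∀ v, (Γ.neighborSet v).Finite) {K' : Set V} (hK'fin : K'.Finite)
    (hK'ne : K'.Nonempty) :
    Finite ((SimpleGraph.induce K'ᶜ Γ).ConnectedComponent) := by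
  classical
  obtain ⟨k₀, hk₀⟩ := hK'ne
  set N : Set V := ⋃ k ∈ K', Γ.neighborSet k with hN
  have hNfin : N.Finite := Set.Finite.biUnion hK'fin (fun k _ => hlf k)
  haveI : Finite N := hNfin.to_subtype
  have key : ∀ C : (SimpleGraph.induce K'ᶜ Γ).ConnectedComponent,
      ∃ b : V, ∃ hb : b ∈ K'ᶜ, b ∈ N ∧
        (SimpleGraph.induce K'ᶜ Γ).connectedComponentMk ⟨b, hb⟩ = C := by
    intro C
    refine C.ind ?_
    rintro ⟨v, hv⟩
    obtain ⟨p⟩ := hconn v k₀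
    obtain ⟨b, hb, ⟨k', hk', hadj⟩, hreach⟩ := exists_boundary p hv hk₀
    refine ⟨b, hb, ?_, ?_⟩
    · exact Set.mem_biUnion hk' hadj.symm
    · exact ConnectedComponent.sound hreach.symm
  choose b hb hbN hbC using key
  refine Finite.of_injective (fun C => (⟨b C, hbN C⟩ : N)) ?_
  intro C C' h
  simp only [Subtype.mk.injEq] at h
  rw [← hbC C, ← hbC C']
  congr 1
  exact Subtype.ext h

/-! ### Schreier graph lemmas -/

variable {H : Type*} [Group H]

lemma schreier_adj {S₀ : Set H} {L : Subgroup H} {x y : H ⧸ L} :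
    (schreierGraph H S₀ L).Adj x y ↔ x ≠ y ∧ ∃ s ∈ S₀, (s • x = y ∨ s • y = x) := by
  constructor
  · rintro ⟨hne, s, hs, g, (⟨h1, h2⟩ | ⟨h1, h2⟩)⟩
    · exact ⟨hne, s, hs, Or.inl (by rw [← h1, ← h2]; rfl)⟩
    · exact ⟨hne, s, hs, Or.inr (by rw [← h1, ← h2]; rfl)⟩
  · rintro ⟨hne, s, hs, (h | h)⟩
    · obtain ⟨g, rfl⟩ := QuotientGroup.mk_surjective x
      exact ⟨hne, s, hs, g, Or.inl ⟨rfl, h⟩⟩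
    · obtain ⟨g, rfl⟩ := QuotientGroup.mk_surjective y
      exact ⟨hne, s, hs, g, Or.inr ⟨rfl, h⟩⟩

lemma reachable_smul {S₀ : Set H} {L : Subgroup H} (hgen : Subgroup.closure S₀ = ⊤)
    (h : H) (x : H ⧸ L) : (schreierGraph H S₀ L).Reachable x (h • x) := by
  have hmem : h ∈ Subgroup.closure S₀ := by rw [hgen]; trivial
  induction hmem using Subgroup.closure_induction generalizing x with
  | mem s hs =>
    by_cases hsx : s • x = x
    · rw [hsx]
    · exact (schreier_adj.mpr ⟨fun e => hsx e.symm, s, hs, Or.inl rfl⟩).reachable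
  | one => rw [one_smul]
  | mul a b _ _ iha ihb =>
    rw [mul_smul]; exact (ihb x).trans (iha (b • x))
  | inv a _ iha =>
    have := iha (a⁻¹ • x)
    rw [smul_inv_smul] at this
    exact this.symm

lemma schreier_preconnected {S₀ : Set H} {L : Subgroup H}
    (hgen : Subgroup.closure S₀ = ⊤) : (schreierGraph H S₀ L).Preconnected := by
  intro x y
  obtain ⟨g, rfl⟩ := QuotientGroup.mk_surjective x
  obtain ⟨g', rfl⟩ := QuotientGroup.mk_surjective y
  have := reachable_smul (L := L) hgen (g' * g⁻¹) (QuotientGroup.mk g)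
  simpa [QuotientGroup.mk_mul_of_mem, MulAction.Quotient.smul_mk, mul_assoc] using this

lemma schreier_neighborSet_finite {S₀ : Set H} {L : Subgroup H} (hfin : S₀.Finite)
    (x : H ⧸ L) : ((schreierGraph H S₀ L).neighborSet x).Finite := by
  apply Set.Finite.subset ((hfin.union hfin.inv).image (fun s => s • x))
  rintro y hy
  rw [mem_neighborSet, schreier_adj] at hy
  obtain ⟨-, s, hs, (h | h)⟩ := hy
  · exact ⟨s, Or.inl hs, h⟩
  · exact ⟨s⁻¹, Or.inr (Set.inv_mem_inv.mpr hs), by simp only [← h]; exact inv_smul_smul s y⟩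

/-! ### Word sets -/

def wordSet (T : Set H) : ℕ → Set H
  | 0 => {1}
  | (n+1) => wordSet T n ∪ T * wordSet T n ∪ wordSet T n * T

lemma wordSet_finite {T : Set H} (hT : T.Finite) : ∀ n, (wordSet T n).Finite
  | 0 => Set.finite_singleton 1
  | (n+1) => ((wordSet_finite hT n).union (hT.mul (wordSet_finite hT n))).union
      ((wordSet_finite hT n).mul hT)

lemma wordSet_subset_succ {T : Set H} (n : ℕ) : wordSet T n ⊆ wordSet T (n+1) :=
  fun _ h => Or.inl (Or.inl h)

lemma wordSet_mono {T : Set H} {a b : ℕ} (h : a ≤ b) : wordSet T a ⊆ wordSet T b := by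
  induction b with
  | zero => rw [Nat.le_zero.mp h]
  | succ b ih =>
    rcases Nat.le_succ_iff.mp h with h' | rfl
    · exact (ih h').trans (wordSet_subset_succ b)
    · exact le_rfl

lemma one_mem_wordSet {T : Set H} : ∀ n, (1 : H) ∈ wordSet T n
  | 0 => rfl
  | (n+1) => Or.inl (Or.inl (one_mem_wordSet n))

lemma mem_wordSet_of_mem {T : Set H} {t : H} (ht : t ∈ T) : t ∈ wordSet T 1 := by
  refine Or.inl (Or.inr ?_)
  simpa using Set.mul_mem_mul ht (one_mem_wordSet 0)

lemma wordSet_inv {T : Set H} (hsym : ∀ t ∈ T, t⁻¹ ∈ T) :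
    ∀ n, ∀ w ∈ wordSet T n, w⁻¹ ∈ wordSet T n := by
  intro n
  induction n with
  | zero => rintro w rfl; simp [wordSet]
  | succ n ih =>
    rintro w ((hw | hw) | hw)
    · exact Or.inl (Or.inl (ih w hw))
    · obtain ⟨t, ht, u, hu, rfl⟩ := hw
      exact Or.inr (by rw [mul_inv_rev]; exact Set.mul_mem_mul (ih u hu) (hsym t ht))
    · obtain ⟨u, hu, t, ht, rfl⟩ := hw
      exact Or.inl (Or.inr (by rw [mul_inv_rev]; exact Set.mul_mem_mul (hsym t ht) (ih u hu)))

lemma wordSet_mul {T : Set H} :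
    ∀ n, ∀ w ∈ wordSet T n, ∀ k, ∀ w' ∈ wordSet T k, w * w' ∈ wordSet T (n + k) := by
  intro n
  induction n with
  | zero => rintro w rfl k w' hw'; rw [one_mul, Nat.zero_add]; exact hw'
  | succ n ih =>
    rintro w ((hw | hw) | hw) k w' hw'
    · exact wordSet_mono (by omega) (ih w hw k w' hw')
    · obtain ⟨t, ht, u, hu, rfl⟩ := hw
      rw [mul_assoc]
      rw [Nat.add_right_comm]
      exact Or.inl (Or.inr (Set.mul_mem_mul ht (ih u hu k w' hw')))
    · obtain ⟨u, hu, t, ht, rfl⟩ := hw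
      rw [mul_assoc]
      have : t * w' ∈ wordSet T (k + 1) :=
        Or.inl (Or.inr (Set.mul_mem_mul ht hw'))
      have := ih u hu (k+1) _ this
      exact wordSet_mono (by omega) this

lemma exists_wordSet {T : Set H} (hsym : ∀ t ∈ T, t⁻¹ ∈ T)
    (hgen : Subgroup.closure T = ⊤) (h : H) :
    ∃ n, h ∈ wordSet T n := by
  have hmem : h ∈ Subgroup.closure T := by rw [hgen]; trivial
  induction hmem using Subgroup.closure_induction with
  | mem t ht => exact ⟨1, mem_wordSet_of_mem ht⟩
  | one => exact ⟨0, rfl⟩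
  | mul a b _ _ iha ihb =>
    obtain ⟨n, hn⟩ := iha; obtain ⟨k, hk⟩ := ihb
    exact ⟨n + k, wordSet_mul n a hn k b hk⟩
  | inv a _ iha =>
    obtain ⟨n, hn⟩ := iha
    exact ⟨n, wordSet_inv hsym n a hn⟩

lemma exists_uniform_word {T : Set H} {A : Set H} (hA : A.Finite)
    (h : ∀ a ∈ A, ∃ n, a ∈ wordSet T n) : ∃ m, A ⊆ wordSet T m := by
  refine Set.Finite.induction_on
    (motive := fun A _ => (∀ a ∈ A, ∃ n, a ∈ wordSet T n) → ∃ m, A ⊆ wordSet T m)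
    A hA (fun _ => ⟨0, Set.empty_subset _⟩) ?_ h
  rintro a s - - ih h'
  obtain ⟨m, hm⟩ := ih (fun a ha => h' a (Set.mem_insert_of_mem _ ha))
  obtain ⟨n, hn⟩ := h' a (Set.mem_insert _ _)
  exact ⟨max n m, Set.insert_subset (wordSet_mono (le_max_left n m) hn)
    (hm.trans (wordSet_mono (le_max_right n m)))⟩

/-! ### Walks in Schreier graphs -/

lemma step_walk {T : Set H} {L : Subgroup H} {t : H} (ht : t ∈ T) (z : H ⧸ L) :
    ∃ q : (schreierGraph H T L).Walk z (t • z), ∀ v ∈ q.support, v = z ∨ v = t • z := by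
  by_cases h : t • z = z
  · refine ⟨Walk.nil.copy rfl h.symm, ?_⟩
    intro v hv
    simp only [Walk.support_copy, Walk.support_nil, List.mem_singleton] at hv
    exact Or.inl hv
  · refine ⟨Walk.cons (schreier_adj.mpr ⟨fun e => h e.symm, t, ht, Or.inl rfl⟩) Walk.nil, ?_⟩
    intro v hv
    simp only [Walk.support_cons, Walk.support_nil, List.mem_cons, List.mem_singleton,
      List.not_mem_nil, or_false] at hv
    exact hv.imp id id

lemma exists_walk_smul {T : Set H} {L : Subgroup H} :
    ∀ {n : ℕ} {w : H}, w ∈ wordSet T n → ∀ (x : H ⧸ L),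
    ∃ p : (schreierGraph H T L).Walk x (w • x),
      ∀ v ∈ p.support, ∃ u ∈ wordSet T n, u • x = v := by
  intro n
  induction n with
  | zero =>
    rintro w rfl x
    refine ⟨Walk.nil.copy rfl (one_smul H x).symm, ?_⟩
    intro v hv
    simp only [Walk.support_copy, Walk.support_nil, List.mem_singleton] at hv
    exact ⟨1, one_mem_wordSet 0, by rw [one_smul, hv]⟩
  | succ n ih =>
    rintro w ((hw | hw) | hw) x
    · obtain ⟨p, hp⟩ := ih hw x
      exact ⟨p, fun v hv => (hp v hv).imp fun u hu => ⟨wordSet_subset_succ n hu.1, hu.2⟩⟩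
    · obtain ⟨t, ht, u, hu, rfl⟩ := hw
      obtain ⟨p, hp⟩ := ih hu x
      obtain ⟨q, hq⟩ := step_walk ht (u • x)
      refine ⟨(p.append q).copy rfl (mul_smul t u x).symm, ?_⟩
      intro v hv
      simp only [Walk.support_copy] at hv
      rcases (Walk.mem_support_append_iff _ _).mp hv with h | h
      · exact (hp v h).imp fun u' hu' => ⟨wordSet_subset_succ n hu'.1, hu'.2⟩
      · rcases hq v h with rfl | rfl
        · exact ⟨u, wordSet_subset_succ n hu, rfl⟩
        · exact ⟨t * u, Or.inl (Or.inr (Set.mul_mem_mul ht hu)), mul_smul t u x⟩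
    · obtain ⟨u, hu, t, ht, rfl⟩ := hw
      obtain ⟨q, hq⟩ := step_walk (L := L) ht x
      obtain ⟨p, hp⟩ := ih hu (t • x)
      refine ⟨(q.append p).copy rfl (mul_smul u t x).symm, ?_⟩
      intro v hv
      simp only [Walk.support_copy] at hv
      rcases (Walk.mem_support_append_iff _ _).mp hv with h | h
      · rcases hq v h with hvx | hvx
        · exact ⟨1, one_mem_wordSet _, by rw [one_smul, hvx]⟩
        · exact ⟨t, wordSet_mono (Nat.one_le_iff_ne_zero.mpr (Nat.succ_ne_zero n))
            (mem_wordSet_of_mem ht), hvx.symm⟩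
      · obtain ⟨u', hu', rfl⟩ := hp v h
        exact ⟨u' * t, Or.inr (Set.mul_mem_mul hu' ht), mul_smul u' t x⟩

variable {H : Type*} [Group H]

lemma main_step {L : Subgroup H} (S₁ T : Set H)
    (hS₁fin : S₁.Finite) (hTsym : ∀ t ∈ T, t⁻¹ ∈ T)
    (hS₁gen : Subgroup.closure S₁ = ⊤) (m : ℕ) (hm : S₁ ⊆ wordSet T m)
    (hTfin : T.Finite)
    (h1 : ∀ K' : Finset (H ⧸ L),
      {C : (induce ((↑K' : Set (H ⧸ L)))ᶜ (schreierGraph H S₁ L)).ConnectedComponent |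
        C.supp.Infinite}.encard ≤ 1)
    (K : Finset (H ⧸ L)) :
    {C : (induce ((↑K : Set (H ⧸ L)))ᶜ (schreierGraph H T L)).ConnectedComponent |
      C.supp.Infinite}.encard ≤ 1 := by
  classical
  set Γ₁ := schreierGraph H S₁ L with hΓ₁def
  set Γ₂ := schreierGraph H T L with hΓ₂def
  rw [Set.encard_le_one_iff]
  rintro D₁ D₂ hD₁ hD₂
  rw [Set.mem_setOf_eq] at hD₁ hD₂
  have v₀ : H ⧸ L := QuotientGroup.mk 1
  have hWm : (wordSet T m).Finite := wordSet_finite hTfin m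
  set K'set : Set (H ⧸ L) :=
    insert v₀ (↑K ∪ ⋃ w ∈ wordSet T m, (fun x => w • x) '' (↑K : Set (H ⧸ L))) with hK'def
  have hK'fin : K'set.Finite :=
    ((K.finite_toSet.union (hWm.biUnion (fun w _ => K.finite_toSet.image _)))).insert v₀
  set K' : Finset (H ⧸ L) := hK'fin.toFinset with hK'Fdef
  have hK'coe : (↑K' : Set (H ⧸ L)) = K'set := hK'fin.coe_toFinset
  have hKsub : (↑K : Set (H ⧸ L)) ⊆ K'set :=
    fun x hx => Set.mem_insert_iff.mpr (Or.inr (Or.inl hx))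
  -- avoidance
  have havoid : ∀ a : H ⧸ L, a ∉ K'set → ∀ u ∈ wordSet T m, u • a ∉ (↑K : Set (H ⧸ L)) := by
    intro a ha u hu hmem
    apply ha
    refine Set.mem_insert_iff.mpr (Or.inr (Or.inr ?_))
    refine Set.mem_biUnion (wordSet_inv hTsym m u hu) ?_
    exact ⟨u • a, hmem, inv_smul_smul u a⟩
  -- transfer of one generator move
  have transfer : ∀ (a : H ⧸ L), a ∉ K'set → ∀ u ∈ wordSet T m,
      ∀ (ha : a ∈ (↑K : Set (H ⧸ L))ᶜ) (hb : u • a ∈ (↑K : Set (H ⧸ L))ᶜ),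
      (induce ((↑K : Set (H ⧸ L))ᶜ) Γ₂).Reachable ⟨a, ha⟩ ⟨u • a, hb⟩ := by
    intro a ha' u hu ha hb
    obtain ⟨p, hp⟩ := exists_walk_smul hu a
    refine reachable_induce_of_walk p ?_ ha hb
    intro v hv
    obtain ⟨u', hu', rfl⟩ := hp v hv
    exact havoid a ha' u' hu'
  have memK : ∀ x : H ⧸ L, x ∉ K'set → x ∈ (↑K : Set (H ⧸ L))ᶜ :=
    fun x hx hxK => hx (hKsub hxK)
  -- transfer of induced Γ₁-walks
  have transfer2 : ∀ (a b : {x : H ⧸ L // x ∈ ((↑K' : Set (H ⧸ L)))ᶜ})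
      (q : (induce ((↑K' : Set (H ⧸ L))ᶜ) Γ₁).Walk a b)
      (ha : a.val ∈ (↑K : Set (H ⧸ L))ᶜ) (hb : b.val ∈ (↑K : Set (H ⧸ L))ᶜ),
      (induce ((↑K : Set (H ⧸ L))ᶜ) Γ₂).Reachable ⟨a.val, ha⟩ ⟨b.val, hb⟩ := by
    intro a b q
    induction q with
    | nil =>
      intro ha hb
      exact Reachable.refl _
    | @cons a c b hadj q ih =>
      intro ha hb
      have hc' : c.val ∉ K'set := by rw [← hK'coe]; exact c.2
      have ha' : a.val ∉ K'set := by rw [← hK'coe]; exact a.2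
      have hcK : c.val ∈ (↑K : Set (H ⧸ L))ᶜ := memK _ hc'
      have hadj' : Γ₁.Adj a.val c.val := hadj
      have hex : ∃ u ∈ wordSet T m, u • a.val = c.val := by
        rcases (schreier_adj.mp hadj').2 with ⟨s, hs, (h | h)⟩
        · exact ⟨s, hm hs, h⟩
        · exact ⟨s⁻¹, wordSet_inv hTsym m s (hm hs), by rw [← h, inv_smul_smul]⟩
      obtain ⟨u, hu, hux⟩ := hex
      have hbmem : u • a.val ∈ (↑K : Set (H ⧸ L))ᶜ := by rw [hux]; exact hcK
      have step := transfer a.val ha' u hu ha hbmem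
      have heq : (⟨u • a.val, hbmem⟩ : {x : H ⧸ L // x ∈ ((↑K : Set (H ⧸ L)))ᶜ}) =
          ⟨c.val, hcK⟩ := Subtype.ext hux
      rw [heq] at step
      exact step.trans (ih hcK hb)
  -- finitely many Γ₁-components outside K'
  haveI hfinCC : Finite ((induce ((↑K' : Set (H ⧸ L))ᶜ) Γ₁).ConnectedComponent) := by
    refine components_finite (schreier_preconnected hS₁gen)
      (schreier_neighborSet_finite hS₁fin) (by rw [hK'coe]; exact hK'fin) ?_
    rw [hK'coe]
    exact ⟨v₀, Set.mem_insert _ _⟩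
  set F : Set (H ⧸ L) :=
    ⋃ C ∈ {C : (induce ((↑K' : Set (H ⧸ L))ᶜ) Γ₁).ConnectedComponent | C.supp.Finite},
      (Subtype.val '' C.supp) with hFdef
  have hFfin : F.Finite := Set.Finite.biUnion (Set.toFinite _) (fun C hC => hC.image _)
  -- pick points
  have hpre : (Subtype.val ⁻¹' (K'set ∪ F) :
      Set {x : H ⧸ L // x ∈ ((↑K : Set (H ⧸ L)))ᶜ}).Finite :=
    (hK'fin.union hFfin).preimage (Set.injOn_of_injective Subtype.val_injective)
  obtain ⟨x₁, hx₁D, hx₁⟩ := (hD₁.diff hpre).nonempty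
  obtain ⟨x₂, hx₂D, hx₂⟩ := (hD₂.diff hpre).nonempty
  rw [Set.mem_preimage] at hx₁ hx₂
  have hx₁K' : x₁.val ∉ K'set := fun h => hx₁ (Set.mem_union_left _ h)
  have hx₂K' : x₂.val ∉ K'set := fun h => hx₂ (Set.mem_union_left _ h)
  have hx₁F : x₁.val ∉ F := fun h => hx₁ (Set.mem_union_right _ h)
  have hx₂F : x₂.val ∉ F := fun h => hx₂ (Set.mem_union_right _ h)
  have hy₁mem : x₁.val ∈ ((↑K' : Set (H ⧸ L)))ᶜ := by rw [hK'coe]; exact hx₁K'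
  have hy₂mem : x₂.val ∈ ((↑K' : Set (H ⧸ L)))ᶜ := by rw [hK'coe]; exact hx₂K'
  set y₁ : {x : H ⧸ L // x ∈ ((↑K' : Set (H ⧸ L)))ᶜ} := ⟨x₁.val, hy₁mem⟩ with hy₁def
  set y₂ : {x : H ⧸ L // x ∈ ((↑K' : Set (H ⧸ L)))ᶜ} := ⟨x₂.val, hy₂mem⟩ with hy₂def
  set C₁ := (induce ((↑K' : Set (H ⧸ L))ᶜ) Γ₁).connectedComponentMk y₁ with hC₁def
  set C₂ := (induce ((↑K' : Set (H ⧸ L))ᶜ) Γ₁).connectedComponentMk y₂ with hC₂def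
  have hC₁inf : C₁.supp.Infinite := by
    by_contra hfin
    rw [Set.not_infinite] at hfin
    exact hx₁F (Set.mem_biUnion (Set.mem_setOf_eq ▸ hfin) ⟨y₁, rfl, rfl⟩)
  have hC₂inf : C₂.supp.Infinite := by
    by_contra hfin
    rw [Set.not_infinite] at hfin
    exact hx₂F (Set.mem_biUnion (Set.mem_setOf_eq ▸ hfin) ⟨y₂, rfl, rfl⟩)
  have hCeq : C₁ = C₂ := Set.encard_le_one_iff.mp (h1 K') C₁ C₂ hC₁inf hC₂inf
  have hreach : (induce ((↑K' : Set (H ⧸ L))ᶜ) Γ₁).Reachable y₁ y₂ :=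
    (SimpleGraph.ConnectedComponent.eq).mp hCeq
  obtain ⟨q⟩ := hreach
  have hmain := transfer2 y₁ y₂ q x₁.2 x₂.2
  have hx₁eq : (⟨(y₁ : {x : H ⧸ L // x ∈ ((↑K' : Set (H ⧸ L)))ᶜ}).val, x₁.2⟩ :
      {x : H ⧸ L // x ∈ ((↑K : Set (H ⧸ L)))ᶜ}) = x₁ := Subtype.ext rfl
  have hx₂eq : (⟨(y₂ : {x : H ⧸ L // x ∈ ((↑K' : Set (H ⧸ L)))ᶜ}).val, x₂.2⟩ :
      {x : H ⧸ L // x ∈ ((↑K : Set (H ⧸ L)))ᶜ}) = x₂ := Subtype.ext rfl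
  rw [hx₁eq, hx₂eq] at hmain
  rw [ConnectedComponent.mem_supp_iff] at hx₁D hx₂D
  rw [← hx₁D, ← hx₂D]
  exact ConnectedComponent.sound hmain

lemma schreier_iso {G : Type*} [Group G] (S : Set G) (π : G →* H)
    (hπ : Function.Surjective π) (L : Subgroup H) :
    Nonempty ((schreierGraph G S (L.comap π)) ≃g (schreierGraph H (π '' S) L)) := by
  set L' := L.comap π with hL'def
  let f : G ⧸ L' → H ⧸ L := fun x => Quotient.liftOn' x (fun g => QuotientGroup.mk (π g))
    (by
      intro a b h
      rw [QuotientGroup.leftRel_apply] at h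
      rw [QuotientGroup.eq]
      have h' : π (a⁻¹ * b) ∈ L := h
      simpa [map_mul, map_inv] using h')
  have hf : ∀ g : G, f (QuotientGroup.mk g) = QuotientGroup.mk (π g) := fun g => rfl
  have hfsurj : Function.Surjective f := by
    intro y; obtain ⟨h, rfl⟩ := QuotientGroup.mk_surjective y
    obtain ⟨g, rfl⟩ := hπ h
    exact ⟨QuotientGroup.mk g, rfl⟩
  have hfinj : Function.Injective f := by
    intro x y hxy
    obtain ⟨a, rfl⟩ := QuotientGroup.mk_surjective x
    obtain ⟨b, rfl⟩ := QuotientGroup.mk_surjective y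
    rw [hf, hf, QuotientGroup.eq] at hxy
    rw [QuotientGroup.eq]
    simpa [hL'def, Subgroup.mem_comap, map_mul, map_inv] using hxy
  have hsmul : ∀ (g : G) (x : G ⧸ L'), f (g • x) = π g • f x := by
    intro g x
    obtain ⟨a, rfl⟩ := QuotientGroup.mk_surjective x
    rw [MulAction.Quotient.smul_mk, hf, hf, MulAction.Quotient.smul_mk,
      smul_eq_mul, smul_eq_mul, map_mul]
  let ε := Equiv.ofBijective f ⟨hfinj, hfsurj⟩
  refine ⟨{ toEquiv := ε, map_rel_iff' := ?_ }⟩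
  intro x y
  show (schreierGraph H (π '' S) L).Adj (f x) (f y) ↔ (schreierGraph G S L').Adj x y
  rw [schreier_adj, schreier_adj]
  constructor
  · rintro ⟨hne, s', ⟨s, hs, rfl⟩, (h | h)⟩
    · refine ⟨fun e => hne (by rw [e]), s, hs, Or.inl (hfinj ?_)⟩
      rw [hsmul]; exact h
    · refine ⟨fun e => hne (by rw [e]), s, hs, Or.inr (hfinj ?_)⟩
      rw [hsmul]; exact h
  · rintro ⟨hne, s, hs, (h | h)⟩
    · exact ⟨fun e => hne (hfinj e), π s, ⟨s, hs, rfl⟩, Or.inl (by rw [← hsmul, h])⟩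
    · exact ⟨fun e => hne (hfinj e), π s, ⟨s, hs, rfl⟩, Or.inr (by rw [← hsmul, h])⟩

end FWAux

open FWAux in
/-- Property FW passes to quotients of finitely generated groups. -/
theorem stmt11 {G H : Type*} [Group G] [Group H] (S : Finset G) (hS : IsSymmGen S)
    (hG : ∀ L : Subgroup G, numEnds (schreierGraph G (↑S) L) ≤ 1)
    (π : G →* H) (hπ : Function.Surjective π) : HasFW H := by
  intro T hT L
  classical
  have hTsym : ∀ t ∈ (↑T : Set H), t⁻¹ ∈ (↑T : Set H) := fun t ht => hT.1 t ht
  have hTgen : Subgroup.closure (↑T : Set H) = ⊤ := hT.2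
  set S₁ : Set H := π '' ↑S with hS₁def
  have hS₁fin : S₁.Finite := S.finite_toSet.image π
  have hS₁gen : Subgroup.closure S₁ = ⊤ := by
    rw [← MonoidHom.map_closure, hS.2, ← MonoidHom.range_eq_map]
    exact MonoidHom.range_eq_top.mpr hπ
  obtain ⟨e⟩ := schreier_iso (↑S : Set G) π hπ L
  have hΓ₁ : numEnds (schreierGraph H S₁ L) ≤ 1 :=
    le_trans (numEnds_le_of_iso e) (hG (L.comap π))
  rw [show numEnds (schreierGraph H S₁ L) = ⨆ K' : Finset (H ⧸ L),
      {C : (SimpleGraph.induce ((↑K' : Set (H ⧸ L))ᶜ) (schreierGraph H S₁ L)).ConnectedComponent |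
        C.supp.Infinite}.encard from rfl] at hΓ₁
  have h1 : ∀ K' : Finset (H ⧸ L),
      {C : (SimpleGraph.induce ((↑K' : Set (H ⧸ L))ᶜ) (schreierGraph H S₁ L)).ConnectedComponent |
        C.supp.Infinite}.encard ≤ 1 :=
    fun K' => le_trans (le_iSup (fun K'' : Finset (H ⧸ L) =>
      {C : (SimpleGraph.induce ((↑K'' : Set (H ⧸ L))ᶜ)
        (schreierGraph H S₁ L)).ConnectedComponent |
          C.supp.Infinite}.encard) K') hΓ₁
  obtain ⟨m, hm⟩ := exists_uniform_word hS₁fin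
    (fun a _ => exists_wordSet hTsym hTgen a)
  rw [show numEnds (schreierGraph H (↑T) L) = ⨆ K : Finset (H ⧸ L),
      {C : (SimpleGraph.induce ((↑K : Set (H ⧸ L))ᶜ) (schreierGraph H (↑T) L)).ConnectedComponent |
        C.supp.Infinite}.encard from rfl]
  exact iSup_le fun K =>
    main_step S₁ (↑T) hS₁fin hTsym hS₁gen m hm T.finite_toSet h1 K
end

section
/- Let G and H be finitely generated groups. The direct product G × H has property FW if and only if both G and H have property FW. -/
open Pointwise
open scoped symmDiff

section Basics
variable {G X : Type*} [Group G] [MulAction G X]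

/-- Elements with finite commensuration form a subgroup; closure argument. -/
theorem finite_symmDiff_all {S : Set G} (hS : Subgroup.closure S = ⊤) (M : Set X)
    (h : ∀ s ∈ S, ((s • M) ∆ M).Finite) : ∀ g : G, ((g • M) ∆ M).Finite := by
  let K : Subgroup G :=
    { carrier := {g : G | ((g • M) ∆ M).Finite}
      one_mem' := by simp [one_smul]
      mul_mem' := by
        intro a b ha hb
        have h1 : ((a * b) • M) ∆ M ⊆ ((a • (b • M)) ∆ (a • M)) ∪ ((a • M) ∆ M) := by
          rw [mul_smul]; exact symmDiff_triangle _ _ _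
        have h2 : ((a • (b • M)) ∆ (a • M)) = a • ((b • M) ∆ M) :=
          (Set.smul_set_symmDiff ..).symm
        rw [h2] at h1
        exact Set.Finite.subset ((hb.smul_set).union ha) h1
      inv_mem' := by
        intro a ha
        have : (a⁻¹ • ((a • M) ∆ M)).Finite := ha.smul_set
        rwa [Set.smul_set_symmDiff, inv_smul_smul, symmDiff_comm] at this }
  have htop : K = ⊤ := top_le_iff.mp (hS ▸ (Subgroup.closure_le K).mpr h)
  intro g
  have hg : g ∈ K := by rw [htop]; trivial
  exact hg

theorem smul_eq_all {S : Set G} (hS : Subgroup.closure S = ⊤) (M : Set X)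
    (h : ∀ s ∈ S, s • M = M) : ∀ g : G, g • M = M := by
  let K : Subgroup G :=
    { carrier := {g : G | g • M = M}
      one_mem' := one_smul _ _
      mul_mem' := by intro a b ha hb; rw [Set.mem_setOf_eq, mul_smul, hb, ha]
      inv_mem' := by
        intro a ha
        rw [Set.mem_setOf_eq] at ha ⊢
        rw [← ha, inv_smul_smul, ha] }
  have htop : K = ⊤ := top_le_iff.mp (hS ▸ (Subgroup.closure_le K).mpr h)
  intro g
  have hg : g ∈ K := by rw [htop]; trivial
  exact hg
end Basics

section Schreier
variable {G : Type*} [Group G] {S : Set G} {L : Subgroup G}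

theorem schreier_adj_iff {x y : G ⧸ L} :
    (schreierGraph G S L).Adj x y ↔ x ≠ y ∧ ∃ s ∈ S, (s • x = y ∨ s • y = x) := by
  constructor
  · rintro ⟨hne, s, hs, g, (⟨h1, h2⟩ | ⟨h1, h2⟩)⟩
    · exact ⟨hne, s, hs, Or.inl (by rw [← h1, ← h2]; rfl)⟩
    · exact ⟨hne, s, hs, Or.inr (by rw [← h1, ← h2]; rfl)⟩
  · rintro ⟨hne, s, hs, (h | h)⟩
    · obtain ⟨g, rfl⟩ := QuotientGroup.mk_surjective x
      exact ⟨hne, s, hs, g, Or.inl ⟨rfl, h⟩⟩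
    · obtain ⟨g, rfl⟩ := QuotientGroup.mk_surjective y
      exact ⟨hne, s, hs, g, Or.inr ⟨rfl, h⟩⟩

theorem schreier_adj_of_smul {x y : G ⧸ L} {s : G} (hs : s ∈ S) (h : s • x = y) (hne : x ≠ y) :
    (schreierGraph G S L).Adj x y :=
  schreier_adj_iff.mpr ⟨hne, s, hs, Or.inl h⟩

theorem schreier_reachable (hS : Subgroup.closure S = ⊤) (x y : G ⧸ L) :
    (schreierGraph G S L).Reachable x y := by
  have key : ∀ g : G, ∀ z : G ⧸ L, (schreierGraph G S L).Reachable (g • z) z := by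
    intro g
    have hg : g ∈ Subgroup.closure S := by rw [hS]; trivial
    induction hg using Subgroup.closure_induction with
    | mem s hs =>
      intro z
      by_cases h : s • z = z
      · rw [h]
      · exact (schreier_adj_of_smul hs rfl (fun he => h he.symm)).reachable.symm
    | one => intro z; rw [one_smul]
    | mul a b _ _ ha hb => intro z; rw [mul_smul]; exact (ha (b • z)).trans (hb z)
    | inv a _ ha =>
      intro z
      have := ha (a⁻¹ • z)
      rw [smul_inv_smul] at this
      exact this.symm
  obtain ⟨a, rfl⟩ := QuotientGroup.mk_surjective x
  obtain ⟨b, rfl⟩ := QuotientGroup.mk_surjective y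
  have : ((a * b⁻¹ : G) • (QuotientGroup.mk b : G ⧸ L)) = QuotientGroup.mk a := by
    show QuotientGroup.mk (a * b⁻¹ * b) = _
    rw [inv_mul_cancel_right]
  exact this ▸ key (a * b⁻¹) (QuotientGroup.mk b)

theorem schreier_neighbors_sub (x : G ⧸ L) :
    {y : G ⧸ L | (schreierGraph G S L).Adj x y} ⊆ ⋃ s ∈ S, {s • x, s⁻¹ • x} := by
  intro y hy
  obtain ⟨-, s, hs, (h | h)⟩ := schreier_adj_iff.mp hy
  · exact Set.mem_biUnion hs (Or.inl h.symm)
  · exact Set.mem_biUnion hs (by rw [← h, inv_smul_smul]; right; rfl)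
end Schreier

section Graph
variable {V : Type*} {Γ : SimpleGraph V}

theorem exists_boundary {Ks : Set V} {v k₀ : V} (p : Γ.Walk v k₀) :
    k₀ ∈ Ks → ∀ hv : v ∉ Ks, ∃ (u : V) (hu : u ∉ Ks), (∃ k ∈ Ks, Γ.Adj u k) ∧
      (SimpleGraph.induce Ksᶜ Γ).Reachable ⟨v, hv⟩ ⟨u, hu⟩ := by
  induction p with
  | nil => intro hk hv; exact absurd hk hv
  | @cons a b c hab p ih =>
    intro hk hv
    by_cases hb : b ∈ Ks
    · exact ⟨a, hv, ⟨b, hb, hab⟩, SimpleGraph.Reachable.refl _⟩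
    · obtain ⟨u, hu, hbd, hreach⟩ := ih hk hb
      refine ⟨u, hu, hbd, SimpleGraph.Reachable.trans ?_ hreach⟩
      exact SimpleGraph.Adj.reachable (by exact hab)

theorem components_finite {Ks : Set V} (hconn : ∀ x y : V, Γ.Reachable x y)
    (hbd : {u : V | u ∉ Ks ∧ ∃ k ∈ Ks, Γ.Adj u k}.Finite) (hne : Ks.Nonempty) :
    Finite (SimpleGraph.induce Ksᶜ Γ).ConnectedComponent := by
  obtain ⟨k₀, hk₀⟩ := hne
  classical
  have key : ∀ C : (SimpleGraph.induce Ksᶜ Γ).ConnectedComponent,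
      ∃ u : V, ∃ hu : u ∉ Ks, (u ∈ {u : V | u ∉ Ks ∧ ∃ k ∈ Ks, Γ.Adj u k}) ∧
        (SimpleGraph.induce Ksᶜ Γ).connectedComponentMk ⟨u, hu⟩ = C := by
    intro C
    obtain ⟨⟨v, hv⟩, rfl⟩ := C.exists_rep
    obtain ⟨p⟩ := hconn v k₀
    obtain ⟨u, hu, hb, hreach⟩ := exists_boundary p hk₀ hv
    exact ⟨u, hu, ⟨hu, hb⟩, (SimpleGraph.ConnectedComponent.sound hreach).symm⟩
  have : Finite ↥{u : V | u ∉ Ks ∧ ∃ k ∈ Ks, Γ.Adj u k} := hbd.to_subtype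
  let f : (SimpleGraph.induce Ksᶜ Γ).ConnectedComponent →
      ↥{u : V | u ∉ Ks ∧ ∃ k ∈ Ks, Γ.Adj u k} :=
    fun C => ⟨(key C).choose, (key C).choose_spec.choose_spec.1⟩
  have hfinj : Function.Injective f := by
    intro C C' h
    have h' : ((f C : V)) = ((f C' : V)) := by rw [h]
    have h1 := (key C).choose_spec.choose_spec.2
    have h2 := (key C').choose_spec.choose_spec.2
    rw [← h1, ← h2]
    congr 1
    exact Subtype.ext h'
  exact Finite.of_injective f hfinj

theorem side_constant {W A : Set V}
    (h : ∀ u v : ↥W, (SimpleGraph.induce W Γ).Adj u v → ((u : V) ∈ A ↔ (v : V) ∈ A))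
    {u v : ↥W} (hr : (SimpleGraph.induce W Γ).Reachable u v) : (u : V) ∈ A ↔ (v : V) ∈ A := by
  obtain ⟨p⟩ := hr
  induction p with
  | nil => rfl
  | cons hadj p ih => exact (h _ _ hadj).trans ih
end Graph

section Transitive
variable {G : Type*} [Group G]

theorem quotient_smul_dichotomy {L : Subgroup G} {N : Set (G ⧸ L)}
    (h : ∀ g : G, g • N = N) : N = ∅ ∨ N = Set.univ := by
  rcases N.eq_empty_or_nonempty with he | ⟨x, hx⟩
  · exact Or.inl he
  · refine Or.inr (Set.eq_univ_of_forall fun y => ?_)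
    obtain ⟨a, rfl⟩ := QuotientGroup.mk_surjective x
    obtain ⟨b, rfl⟩ := QuotientGroup.mk_surjective y
    have : ((b * a⁻¹ : G) • (QuotientGroup.mk a : G ⧸ L)) = QuotientGroup.mk b := by
      show QuotientGroup.mk (b * a⁻¹ * a) = _
      rw [inv_mul_cancel_right]
    rw [← this, ← h (b * a⁻¹)]
    exact Set.smul_mem_smul_set hx

theorem finite_or_compl_finite_of_hasFW (hFW : HasFW G) (S : Finset G) (hS : IsSymmGen S)
    (L : Subgroup G) (N : Set (G ⧸ L)) (hN : ∀ s ∈ (S : Set G), ((s • N) ∆ N).Finite) :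
    N.Finite ∨ Nᶜ.Finite := by
  by_contra hcon
  push_neg at hcon
  obtain ⟨hNinf, hNcinf⟩ := hcon
  classical
  set Γ := schreierGraph G (↑S) L with hΓ
  set D : Set (G ⧸ L) := ⋃ s ∈ (S : Set G), ((s • N) ∆ N) with hD
  have hDfin : D.Finite := Set.Finite.biUnion S.finite_toSet hN
  -- The one-step transfer claim
  have claim : ∀ a b : G ⧸ L, a ∉ D → (∃ s ∈ (S : Set G), s • b = a) → b ∈ N → a ∈ N := by
    rintro a b haD ⟨s, hs, rfl⟩ hbN
    by_contra haN
    exact haD (Set.mem_biUnion hs (Set.mem_symmDiff.mpr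
      (Or.inl ⟨Set.smul_mem_smul_set hbN, haN⟩)))
  rcases Set.eq_empty_or_nonempty D with hDe | hDne
  · -- no boundary at all : N is invariant
    have hinv : ∀ g : G, g • N = N := by
      refine smul_eq_all hS.2 N fun s hs => ?_
      have : (s • N) ∆ N ⊆ D := by
        rw [hD]
        exact Set.subset_biUnion_of_mem (u := fun s : G => (s • N) ∆ N) hs
      rw [hDe, Set.subset_empty_iff] at this
      exact symmDiff_eq_bot.mp this
    rcases quotient_smul_dichotomy hinv with rfl | rfl
    · exact hNinf Set.finite_empty
    · exact hNcinf (by simp)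
  · set K : Finset (G ⧸ L) := hDfin.toFinset with hK
    have hKD : (↑K : Set (G ⧸ L)) = D := hDfin.coe_toFinset
    have hKne : (↑K : Set (G ⧸ L)).Nonempty := by rw [hKD]; exact hDne
    -- adjacency within the complement of K does not cross the boundary of N
    have crossing : ∀ u v : ↥((↑K : Set (G ⧸ L))ᶜ),
        (SimpleGraph.induce ((↑K : Set (G ⧸ L))ᶜ) Γ).Adj u v → ((u : G ⧸ L) ∈ N ↔ (v : G ⧸ L) ∈ N) := by
      intro u v hadj
      have hadj' : Γ.Adj ↑u ↑v := hadj
      have huD : (u : G ⧸ L) ∉ D := by rw [← hKD]; exact u.2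
      have hvD : (v : G ⧸ L) ∉ D := by rw [← hKD]; exact v.2
      obtain ⟨hne, s, hs, h | h⟩ := schreier_adj_iff.mp hadj'
      · have hsS : s ∈ S := hs
        have hs' : (s⁻¹ : G) ∈ (S : Set G) := hS.1 s hsS
        constructor
        · exact fun h' => claim _ _ hvD ⟨s, hs, h⟩ h'
        · exact fun h' => claim _ _ huD ⟨s⁻¹, hs', by rw [← h, inv_smul_smul]⟩ h'
      · have hsS : s ∈ S := hs
        have hs' : (s⁻¹ : G) ∈ (S : Set G) := hS.1 s hsS
        constructor
        · exact fun h' => claim _ _ hvD ⟨s⁻¹, hs', by rw [← h, inv_smul_smul]⟩ h'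
        · exact fun h' => claim _ _ huD ⟨s, hs, h⟩ h'
    -- finitely many components
    have hconn : ∀ x y : G ⧸ L, Γ.Reachable x y := schreier_reachable hS.2
    have hnbrfin : ∀ x : G ⧸ L, {y : G ⧸ L | Γ.Adj x y}.Finite := by
      intro x
      refine Set.Finite.subset ?_ (schreier_neighbors_sub x)
      exact Set.Finite.biUnion S.finite_toSet fun s _ => (Set.finite_singleton _).insert _
    have hbdfin : {u : G ⧸ L | u ∉ (↑K : Set (G ⧸ L)) ∧ ∃ k ∈ (↑K : Set (G ⧸ L)), Γ.Adj u k}.Finite := by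
      refine Set.Finite.subset (Set.Finite.biUnion K.finite_toSet fun k _ => hnbrfin k) ?_
      rintro u ⟨-, k, hk, hadj⟩
      exact Set.mem_biUnion hk hadj.symm
    have hcompfin : Finite (SimpleGraph.induce ((↑K : Set (G ⧸ L))ᶜ) Γ).ConnectedComponent :=
      components_finite hconn hbdfin hKne
    -- find an infinite component inside a given infinite subset-side
    have findcomp : ∀ A : Set (G ⧸ L), A.Infinite →
        ∃ C : (SimpleGraph.induce ((↑K : Set (G ⧸ L))ᶜ) Γ).ConnectedComponent,
          (C.supp ∩ (Subtype.val ⁻¹' A)).Infinite := by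
      intro A hA
      have hAK : (A \ ↑K).Infinite := hA.diff K.finite_toSet
      have hpre : (Subtype.val ⁻¹' (A \ ↑K) : Set ↥((↑K : Set (G ⧸ L))ᶜ)).Infinite := by
        refine Set.Infinite.preimage hAK ?_
        rw [Subtype.range_coe]
        exact fun x hx => hx.2
      have hpre' : (Subtype.val ⁻¹' A : Set ↥((↑K : Set (G ⧸ L))ᶜ)).Infinite :=
        hpre.mono fun x hx => hx.1
      by_contra hcon'
      push_neg at hcon'
      have : (Subtype.val ⁻¹' A : Set ↥((↑K : Set (G ⧸ L))ᶜ)) =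
          ⋃ C : (SimpleGraph.induce ((↑K : Set (G ⧸ L))ᶜ) Γ).ConnectedComponent,
            (C.supp ∩ (Subtype.val ⁻¹' A)) := by
        ext x
        simp only [Set.mem_iUnion, Set.mem_inter_iff]
        constructor
        · intro hx
          exact ⟨(SimpleGraph.induce ((↑K : Set (G ⧸ L))ᶜ) Γ).connectedComponentMk x, rfl, hx⟩
        · rintro ⟨C, -, hx⟩
          exact hx
      rw [this] at hpre'
      exact hpre' (Set.finite_iUnion hcon')
    -- components on each side
    have sidecomp : ∀ A : Set (G ⧸ L), A.Infinite →
        (∀ u v : ↥((↑K : Set (G ⧸ L))ᶜ),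
          (SimpleGraph.induce ((↑K : Set (G ⧸ L))ᶜ) Γ).Adj u v → ((u : G ⧸ L) ∈ A ↔ (v : G ⧸ L) ∈ A)) →
        ∃ C : (SimpleGraph.induce ((↑K : Set (G ⧸ L))ᶜ) Γ).ConnectedComponent,
          C.supp.Infinite ∧ ∀ y ∈ C.supp, (y : G ⧸ L) ∈ A := by
      intro A hA hcross
      obtain ⟨C, hC⟩ := findcomp A hA
      obtain ⟨x₀, hx₀supp, hx₀A⟩ := hC.nonempty
      refine ⟨C, hC.mono Set.inter_subset_left, fun y hy => ?_⟩
      have hreach : (SimpleGraph.induce ((↑K : Set (G ⧸ L))ᶜ) Γ).Reachable y x₀ := by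
        have h1 := (SimpleGraph.ConnectedComponent.mem_supp_iff C y).mp hy
        have h2 := (SimpleGraph.ConnectedComponent.mem_supp_iff C x₀).mp hx₀supp
        exact SimpleGraph.ConnectedComponent.exact (h1.trans h2.symm)
      exact (side_constant hcross hreach).mpr hx₀A
    obtain ⟨C₁, hC₁inf, hC₁N⟩ := sidecomp N hNinf crossing
    obtain ⟨C₂, hC₂inf, hC₂N⟩ := sidecomp Nᶜ hNcinf
      (fun u v h => not_iff_not.mpr (crossing u v h))
    have hCne : C₁ ≠ C₂ := by
      intro h
      obtain ⟨x, hx⟩ := hC₁inf.nonempty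
      exact hC₂N x (h ▸ hx) (hC₁N x hx)
    have h2 : 1 < ({C : (SimpleGraph.induce ((↑K : Set (G ⧸ L))ᶜ) Γ).ConnectedComponent |
        C.supp.Infinite} : Set _).encard :=
      Set.one_lt_encard_iff.mpr ⟨C₁, C₂, hC₁inf, hC₂inf, hCne⟩
    have hle : ({C : (SimpleGraph.induce ((↑K : Set (G ⧸ L))ᶜ) Γ).ConnectedComponent |
        C.supp.Infinite} : Set _).encard ≤ 1 := by
      refine le_trans ?_ (hFW S hS L)
      rw [numEnds]
      exact le_iSup (fun K : Finset (G ⧸ L) =>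
        ({C : (SimpleGraph.induce ((↑K : Set (G ⧸ L))ᶜ) Γ).ConnectedComponent |
          C.supp.Infinite} : Set _).encard) K
    exact absurd hle (not_le.mpr h2)
end Transitive

section OrbitDichotomy
variable {G : Type*} [Group G]

theorem orbit_dichotomy (hFW : HasFW G) (S : Finset G) (hS : IsSymmGen S)
    {X : Type*} [MulAction G X] (M : Set X) (hM : ∀ g : G, ((g • M) ∆ M).Finite) (d : X) :
    (M ∩ MulAction.orbit G d).Finite ∨ (MulAction.orbit G d \ M).Finite := by
  set L := MulAction.stabilizer G d with hL
  have hwd : ∀ a b : G, (QuotientGroup.leftRel L) a b → a • d = b • d := by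
    intro a b hab
    have h := MulAction.mem_stabilizer_iff.mp (QuotientGroup.leftRel_apply.mp hab)
    calc a • d = a • ((a⁻¹ * b) • d) := by rw [h]
    _ = (a * (a⁻¹ * b)) • d := (mul_smul _ _ _).symm
    _ = b • d := by rw [mul_inv_cancel_left]
  let ψ : G ⧸ L → X := fun q => Quotient.liftOn' q (fun g => g • d) hwd
  have hψmk : ∀ g : G, ψ (QuotientGroup.mk g) = g • d := fun g => rfl
  have hψinj : Function.Injective ψ := by
    intro q q'
    induction q using Quotient.inductionOn'
    induction q' using Quotient.inductionOn'
    rename_i a b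
    intro h
    have h' : a • d = b • d := h
    refine QuotientGroup.eq.mpr (MulAction.mem_stabilizer_iff.mpr ?_)
    rw [mul_smul, ← h', inv_smul_smul]
  have hψequi : ∀ (g : G) (q : G ⧸ L), ψ (g • q) = g • ψ q := by
    intro g q
    induction q using Quotient.inductionOn'
    rename_i a
    show ((g * a) • d) = g • (a • d)
    rw [mul_smul]
  have hψrange : Set.range ψ = MulAction.orbit G d := by
    ext x
    constructor
    · rintro ⟨q, rfl⟩
      induction q using Quotient.inductionOn'
      exact MulAction.mem_orbit _ _
    · rintro ⟨g, rfl⟩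
      exact ⟨QuotientGroup.mk g, rfl⟩
  set N : Set (G ⧸ L) := ψ ⁻¹' M with hNdef
  have hsmulN : ∀ g : G, g • N = ψ ⁻¹' (g • M) := by
    intro g
    ext q
    rw [Set.mem_smul_set_iff_inv_smul_mem, Set.mem_preimage, Set.mem_preimage,
      Set.mem_smul_set_iff_inv_smul_mem]
    show ψ (g⁻¹ • q) ∈ M ↔ g⁻¹ • ψ q ∈ M
    rw [hψequi]
  have hN : ∀ s ∈ (S : Set G), ((s • N) ∆ N).Finite := by
    intro s _
    have heq : (s • N) ∆ N = ψ ⁻¹' ((s • M) ∆ M) := by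
      rw [hsmulN]
      ext q
      simp only [Set.mem_symmDiff, Set.mem_preimage]
      show _ ∧ ψ q ∉ M ∨ ψ q ∈ M ∧ _ ↔ _
      tauto
    rw [heq]
    exact Set.Finite.preimage (hψinj.injOn) (hM s)
  rcases finite_or_compl_finite_of_hasFW hFW S hS L N hN with h | h
  · left
    have : M ∩ MulAction.orbit G d = ψ '' N := by
      ext x
      constructor
      · rintro ⟨hxM, hxo⟩
        rw [← hψrange] at hxo
        obtain ⟨q, rfl⟩ := hxo
        exact ⟨q, hxM, rfl⟩
      · rintro ⟨q, hq, rfl⟩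
        exact ⟨hq, by rw [← hψrange]; exact ⟨q, rfl⟩⟩
    rw [this]
    exact h.image ψ
  · right
    have : MulAction.orbit G d \ M = ψ '' Nᶜ := by
      ext x
      constructor
      · rintro ⟨hxo, hxM⟩
        rw [← hψrange] at hxo
        obtain ⟨q, rfl⟩ := hxo
        exact ⟨q, hxM, rfl⟩
      · rintro ⟨q, hq, rfl⟩
        exact ⟨by rw [← hψrange]; exact ⟨q, rfl⟩, hq⟩
    rw [this]
    exact h.image ψ
end OrbitDichotomy

universe ux

/-- Property FW via commensurated subsets: every commensurating action is transfixed. -/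
def CommFW (G : Type*) [Group G] : Prop :=
  ∀ (X : Type ux) [MulAction G X] (M : Set X),
    (∀ g : G, ((g • M) ∆ M).Finite) →
    ∃ M' : Set X, (∀ g : G, g • M' = M') ∧ (M ∆ M').Finite

section Bridge
variable {G : Type*} [Group G]

theorem commFW_of_hasFW (hfg : Group.FG G) (hFW : HasFW G) : CommFW.{ux} G := by
  classical
  obtain ⟨S₀, hgen, hfin⟩ := Group.fg_iff.mp hfg
  set S : Finset G := hfin.toFinset ∪ (hfin.toFinset).image (·⁻¹) with hSdef
  have hSsymm : ∀ s ∈ S, s⁻¹ ∈ S := by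
    intro s hs
    rcases Finset.mem_union.mp hs with h | h
    · exact Finset.mem_union_right _ (Finset.mem_image_of_mem _ h)
    · obtain ⟨t, ht, rfl⟩ := Finset.mem_image.mp h
      exact Finset.mem_union_left _ (by simpa using ht)
  have hScl : Subgroup.closure (S : Set G) = ⊤ := by
    rw [eq_top_iff, ← hgen]
    refine Subgroup.closure_mono ?_
    intro x hx
    simp only [hSdef, Finset.coe_union, Set.mem_union, Finset.coe_image]
    exact Or.inl (hfin.mem_toFinset.mpr hx)
  have hS : IsSymmGen S := ⟨hSsymm, hScl⟩
  intro X instX M hM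
  set D : Set X := ⋃ s ∈ (S : Set G), ((s • M) ∆ M) with hD
  have hDfin : D.Finite := Set.Finite.biUnion S.finite_toSet fun s _ => hM s
  set U : Set X := ⋃ d ∈ D, MulAction.orbit G d with hU
  have hUmem : ∀ x : X, x ∈ U ↔ ∃ d ∈ D, x ∈ MulAction.orbit G d := by
    intro x; simp only [hU, Set.mem_iUnion, exists_prop]
  have hUinv : ∀ (g : G) (x : X), g • x ∈ U ↔ x ∈ U := by
    intro g x
    rw [hUmem, hUmem]
    constructor
    · rintro ⟨d, hd, hmem⟩
      refine ⟨d, hd, ?_⟩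
      have : d ∈ MulAction.orbit G (g • x) := MulAction.mem_orbit_symm.mp hmem
      rw [MulAction.orbit_smul] at this
      exact MulAction.mem_orbit_symm.mp this
    · rintro ⟨d, hd, hmem⟩
      refine ⟨d, hd, ?_⟩
      have : d ∈ MulAction.orbit G x := MulAction.mem_orbit_symm.mp hmem
      rw [← MulAction.orbit_smul g x] at this
      exact MulAction.mem_orbit_symm.mp this
  have hDU : D ⊆ U := fun d hd => (hUmem d).mpr ⟨d, hd, MulAction.mem_orbit_self d⟩
  set M' : Set X := (M \ U) ∪ {x | x ∈ U ∧ (MulAction.orbit G x \ M).Finite} with hM'def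
  -- pointwise invariance for generators
  have hkey : ∀ s ∈ (S : Set G), ∀ x : X, x ∈ M' ↔ s • x ∈ M' := by
    intro s hs x
    by_cases hxU : x ∈ U
    · have hsxU : s • x ∈ U := (hUinv s x).mpr hxU
      have horb : MulAction.orbit G (s • x) = MulAction.orbit G x := MulAction.orbit_smul s x
      constructor
      · rintro (⟨-, hc⟩ | ⟨-, hfino⟩)
        · exact absurd hxU hc
        · exact Or.inr ⟨hsxU, by rw [horb]; exact hfino⟩
      · rintro (⟨-, hc⟩ | ⟨-, hfino⟩)
        · exact absurd hsxU hc
        · exact Or.inr ⟨hxU, by rw [← horb]; exact hfino⟩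
    · have hsxU : s • x ∉ U := fun hc => hxU ((hUinv s x).mp hc)
      have hMiff : x ∈ M ↔ s • x ∈ M := by
        constructor
        · intro hxM
          by_contra hsxM
          exact hsxU (hDU (Set.mem_biUnion hs
            (Set.mem_symmDiff.mpr (Or.inl ⟨Set.smul_mem_smul_set hxM, hsxM⟩))))
        · intro hsxM
          by_contra hxM
          have hsxsM : s • x ∉ s • M := fun hc => hxM (by
            have := Set.mem_smul_set_iff_inv_smul_mem.mp hc
            rwa [inv_smul_smul] at this)
          exact hsxU (hDU (Set.mem_biUnion hs
            (Set.mem_symmDiff.mpr (Or.inr ⟨hsxM, hsxsM⟩))))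
      constructor
      · rintro (⟨hxM, -⟩ | ⟨hc, -⟩)
        · exact Or.inl ⟨hMiff.mp hxM, hsxU⟩
        · exact absurd hc hxU
      · rintro (⟨hsxM, -⟩ | ⟨hc, -⟩)
        · exact Or.inl ⟨hMiff.mpr hsxM, hxU⟩
        · exact absurd hc hsxU
  have hsinv : ∀ s ∈ (S : Set G), s • M' = M' := by
    intro s hs
    ext x
    rw [Set.mem_smul_set_iff_inv_smul_mem]
    constructor
    · intro hx
      have := (hkey s hs (s⁻¹ • x)).mp hx
      rwa [smul_inv_smul] at this
    · intro hx
      have := (hkey s hs (s⁻¹ • x)).mpr (by rwa [smul_inv_smul])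
      exact this
  have hinv : ∀ g : G, g • M' = M' := smul_eq_all hScl M' hsinv
  -- finiteness of the symmetric difference
  have horbfin : ∀ d ∈ D, ((M ∆ M') ∩ MulAction.orbit G d).Finite := by
    intro d hd
    by_cases hcase : (MulAction.orbit G d \ M).Finite
    · refine Set.Finite.subset hcase ?_
      rintro x ⟨hxd, hxo⟩
      have horb : MulAction.orbit G x = MulAction.orbit G d := MulAction.orbit_eq_iff.mpr hxo
      have hxM' : x ∈ M' := Or.inr ⟨(hUmem x).mpr ⟨d, hd, hxo⟩, by rw [horb]; exact hcase⟩
      rcases Set.mem_symmDiff.mp hxd with ⟨-, hc⟩ | ⟨-, hxM⟩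
      · exact absurd hxM' hc
      · exact ⟨hxo, hxM⟩
    · have hMfin : (M ∩ MulAction.orbit G d).Finite :=
        (orbit_dichotomy hFW S hS M hM d).resolve_right hcase
      refine Set.Finite.subset hMfin ?_
      rintro x ⟨hxd, hxo⟩
      have horb : MulAction.orbit G x = MulAction.orbit G d := MulAction.orbit_eq_iff.mpr hxo
      have hxM' : x ∉ M' := by
        rintro (⟨-, hc⟩ | ⟨-, hfino⟩)
        · exact hc ((hUmem x).mpr ⟨d, hd, hxo⟩)
        · exact hcase (by rwa [horb] at hfino)
      rcases Set.mem_symmDiff.mp hxd with ⟨hxM, -⟩ | ⟨hc, -⟩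
      · exact ⟨hxM, hxo⟩
      · exact absurd hc hxM'
  have hsub : M ∆ M' ⊆ ⋃ d ∈ D, ((M ∆ M') ∩ MulAction.orbit G d) := by
    intro x hx
    have hxU : x ∈ U := by
      by_contra hxU
      rcases Set.mem_symmDiff.mp hx with ⟨hxM, hxM'⟩ | ⟨hxM', hxM⟩
      · exact hxM' (Or.inl ⟨hxM, hxU⟩)
      · rcases hxM' with ⟨hxM2, -⟩ | ⟨hc, -⟩
        · exact hxM hxM2
        · exact hxU hc
    obtain ⟨d, hd, hxo⟩ := (hUmem x).mp hxU
    exact Set.mem_biUnion hd ⟨hx, hxo⟩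
  exact ⟨M', hinv, (hDfin.biUnion horbfin).subset hsub⟩
end Bridge

section BridgeBack
variable {G : Type u} [Group G]

theorem hasFW_of_commFW (h : CommFW.{u} G) : HasFW G := by
  intro S hS L
  rw [numEnds]
  refine iSup_le fun K => ?_
  by_contra hK
  push_neg at hK
  set Γ := schreierGraph G (↑S) L with hΓ
  obtain ⟨C₁, C₂, hC₁, hC₂, hCne⟩ := Set.one_lt_encard_iff.mp hK
  simp only [Set.mem_setOf_eq] at hC₁ hC₂
  set M : Set (G ⧸ L) := Subtype.val '' C₁.supp with hMdef
  have hMmem : ∀ x : G ⧸ L, x ∈ M ↔ ∃ hx : x ∈ ((↑K : Set (G ⧸ L))ᶜ),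
      (⟨x, hx⟩ : ↥((↑K : Set (G ⧸ L))ᶜ)) ∈ C₁.supp := by
    intro x
    constructor
    · rintro ⟨u, hu, rfl⟩
      exact ⟨u.2, by simpa using hu⟩
    · rintro ⟨hx, hmem⟩
      exact ⟨⟨x, hx⟩, hmem, rfl⟩
  have hcomm : ∀ s ∈ (S : Set G), ((s • M) ∆ M).Finite := by
    intro s hs
    have hsub : (s • M) ∆ M ⊆ ↑K ∪ s • (↑K : Set (G ⧸ L)) := by
      intro x hx
      rcases Set.mem_symmDiff.mp hx with ⟨hx1, hx2⟩ | ⟨hx1, hx2⟩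
      · -- x ∈ s • M, x ∉ M : show x ∈ K
        by_cases hxK : x ∈ (↑K : Set (G ⧸ L))
        · exact Or.inl hxK
        exfalso
        obtain ⟨y, hyM, rfl⟩ := hx1
        obtain ⟨hyKc, hysupp⟩ := (hMmem y).mp hyM
        have hne : y ≠ s • y := by intro he; apply hx2; show s • y ∈ M; rw [← he]; exact hyM
        have hadj : Γ.Adj y (s • y) := schreier_adj_of_smul hs rfl hne
        have hadj' : (SimpleGraph.induce ((↑K : Set (G ⧸ L))ᶜ) Γ).Adj ⟨y, hyKc⟩ ⟨s • y, hxK⟩ :=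
          hadj
        have : (⟨s • y, hxK⟩ : ↥((↑K : Set (G ⧸ L))ᶜ)) ∈ C₁.supp := by
          rw [SimpleGraph.ConnectedComponent.mem_supp_iff] at hysupp ⊢
          rw [← hysupp]
          exact (SimpleGraph.ConnectedComponent.sound hadj'.symm.reachable)
        exact hx2 ((hMmem (s • y)).mpr ⟨hxK, this⟩)
      · -- x ∈ M, x ∉ s • M : show s⁻¹ • x ∈ K
        by_cases hxK : s⁻¹ • x ∈ (↑K : Set (G ⧸ L))
        · refine Or.inr ?_
          have : x = s • (s⁻¹ • x) := (smul_inv_smul s x).symm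
          rw [this]
          exact Set.smul_mem_smul_set hxK
        exfalso
        have hsxM : s⁻¹ • x ∉ M := fun hc => hx2 (by
          rw [← smul_inv_smul s x]
          exact Set.smul_mem_smul_set hc)
        obtain ⟨hxKc, hxsupp⟩ := (hMmem x).mp hx1
        have hne : (s⁻¹ • x) ≠ x := fun he => hsxM (by rw [he]; exact hx1)
        have hadj : Γ.Adj (s⁻¹ • x) x := schreier_adj_of_smul hs (smul_inv_smul s x) hne
        have hadj' : (SimpleGraph.induce ((↑K : Set (G ⧸ L))ᶜ) Γ).Adj ⟨s⁻¹ • x, hxK⟩ ⟨x, hxKc⟩ :=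
          hadj
        have : (⟨s⁻¹ • x, hxK⟩ : ↥((↑K : Set (G ⧸ L))ᶜ)) ∈ C₁.supp := by
          rw [SimpleGraph.ConnectedComponent.mem_supp_iff] at hxsupp ⊢
          rw [← hxsupp]
          exact (SimpleGraph.ConnectedComponent.sound hadj'.reachable)
        exact hsxM ((hMmem (s⁻¹ • x)).mpr ⟨hxK, this⟩)
    exact (K.finite_toSet.union K.finite_toSet.smul_set).subset hsub
  have hcommall := finite_symmDiff_all hS.2 M hcomm
  obtain ⟨M', hinv, hfin⟩ := h (G ⧸ L) M hcommall
  have hMinf : M.Infinite := hC₁.image Subtype.val_injective.injOn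
  rcases quotient_smul_dichotomy hinv with rfl | rfl
  · rw [← Set.bot_eq_empty, symmDiff_bot] at hfin
    exact hMinf hfin
  · have hMc : Mᶜ.Finite := by
      have he2 : M ∆ Set.univ = Mᶜ := by
        ext z
        simp [Set.mem_symmDiff]
      rwa [he2] at hfin
    have hsub2 : Subtype.val '' C₂.supp ⊆ Mᶜ := by
      rintro z ⟨w, hw, rfl⟩
      intro hzM
      obtain ⟨u, hu, he⟩ := hzM
      have : u = w := Subtype.val_injective he
      rw [SimpleGraph.ConnectedComponent.mem_supp_iff] at hu hw
      exact hCne (by rw [← hu, ← hw, this])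
    exact (hC₂.image Subtype.val_injective.injOn).mono hsub2 hMc
end BridgeBack

section Product
variable {G : Type*} {H : Type*} [Group G] [Group H]

theorem commFW_fst (h : CommFW.{ux} (G × H)) : CommFW.{ux} G := by
  intro X instX M hM
  letI instP : MulAction (G × H) X := MulAction.compHom X (MonoidHom.fst G H)
  have hsetP : ∀ (p : G × H) (A : Set X), p • A = p.1 • A := fun _ _ => rfl
  have hM' : ∀ p : G × H, ((p • M) ∆ M).Finite := by
    intro p
    rw [hsetP]
    exact hM p.1
  obtain ⟨M', hinv, hfin⟩ := h X M hM'
  refine ⟨M', fun g => ?_, hfin⟩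
  have := hinv (g, 1)
  rwa [hsetP] at this

theorem commFW_snd (h : CommFW.{ux} (G × H)) : CommFW.{ux} H := by
  intro X instX M hM
  letI instP : MulAction (G × H) X := MulAction.compHom X (MonoidHom.snd G H)
  have hsetP : ∀ (p : G × H) (A : Set X), p • A = p.2 • A := fun _ _ => rfl
  have hM' : ∀ p : G × H, ((p • M) ∆ M).Finite := by
    intro p
    rw [hsetP]
    exact hM p.2
  obtain ⟨M', hinv, hfin⟩ := h X M hM'
  refine ⟨M', fun g => ?_, hfin⟩
  have := hinv (1, g)
  rwa [hsetP] at this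

theorem commFW_prod (hG : CommFW.{ux} G) (hH : CommFW.{ux} H) : CommFW.{ux} (G × H) := by
  intro X instP M hM
  letI instG : MulAction G X := MulAction.compHom X (MonoidHom.inl G H)
  letI instH : MulAction H X := MulAction.compHom X (MonoidHom.inr G H)
  have hcommute : ∀ (g : G) (h : H) (x : X), g • (h • x) = h • (g • x) := by
    intro g h x
    show ((g, (1:H)) : G × H) • (((1:G), h) : G × H) • x =
      (((1:G), h) : G × H) • ((g, (1:H)) : G × H) • x
    rw [smul_smul, smul_smul]
    congr 1
    ext <;> simp
  have hsetG : ∀ (g : G) (A : Set X), g • A = ((g, (1:H)) : G × H) • A := fun _ _ => rfl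
  have hsetH : ∀ (h : H) (A : Set X), h • A = (((1:G), h) : G × H) • A := fun _ _ => rfl
  -- G-transfix
  obtain ⟨M₁, hinv₁, hfin₁⟩ := hG X M (fun g => by rw [hsetG]; exact hM (g, 1))
  have hM₁G : ∀ (g : G) (x : X), x ∈ M₁ ↔ g • x ∈ M₁ := by
    intro g x
    conv_rhs => rw [← hinv₁ g]
    exact ⟨fun hx => Set.smul_mem_smul_set hx, fun hx => by
      have := Set.mem_smul_set_iff_inv_smul_mem.mp hx
      rwa [inv_smul_smul] at this⟩
  -- H commensurates M₁
  have hMH : ∀ h : H, ((h • M₁) ∆ M₁).Finite := by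
    intro h
    have hsub : (h • M₁) ∆ M₁ ⊆ (h • (M₁ ∆ M)) ∪ ((h • M) ∆ M) ∪ (M ∆ M₁) := by
      intro x hx
      rcases Set.mem_symmDiff.mp hx with ⟨hx1, hx2⟩ | ⟨hx1, hx2⟩
      · obtain ⟨a, haM₁, rfl⟩ := hx1
        by_cases haM : a ∈ M
        · by_cases hxM : h • a ∈ M
          · exact Or.inr (Set.mem_symmDiff.mpr (Or.inl ⟨hxM, hx2⟩))
          · exact Or.inl (Or.inr (Set.mem_symmDiff.mpr
              (Or.inl ⟨Set.smul_mem_smul_set haM, hxM⟩)))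
        · exact Or.inl (Or.inl ⟨a, Set.mem_symmDiff.mpr (Or.inl ⟨haM₁, haM⟩), rfl⟩)
      · by_cases hxM : x ∈ M
        · by_cases hhx : h⁻¹ • x ∈ M
          · have hhx₁ : h⁻¹ • x ∉ M₁ := by
              intro hc
              exact hx2 ⟨h⁻¹ • x, hc, smul_inv_smul h x⟩
            refine Or.inl (Or.inl ⟨h⁻¹ • x, ?_, smul_inv_smul h x⟩)
            exact Set.mem_symmDiff.mpr (Or.inr ⟨hhx, hhx₁⟩)
          · have : x ∉ h • M := fun hc => hhx (Set.mem_smul_set_iff_inv_smul_mem.mp hc)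
            exact Or.inl (Or.inr (Set.mem_symmDiff.mpr (Or.inr ⟨hxM, this⟩)))
        · exact Or.inr (Set.mem_symmDiff.mpr (Or.inr ⟨hx1, hxM⟩))
    refine Set.Finite.subset (Set.Finite.union (Set.Finite.union ?_ ?_) ?_) hsub
    · exact (hfin₁.subset (symmDiff_comm M₁ M).le).smul_set
    · rw [hsetH]; exact hM (1, h)
    · exact hfin₁
  -- the symmetric differences are G-invariant
  have hsetcomm : ∀ (g : G) (h : H) (A : Set X), g • (h • A) = h • (g • A) := by
    intro g h A
    ext x
    constructor
    · rintro ⟨y, ⟨z, hz, rfl⟩, rfl⟩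
      exact ⟨g • z, ⟨z, hz, rfl⟩, (hcommute g h z).symm⟩
    · rintro ⟨y, ⟨z, hz, rfl⟩, rfl⟩
      exact ⟨h • z, ⟨z, hz, rfl⟩, hcommute g h z⟩
  have hGinvdiff : ∀ (h : H) (g : G), g • ((h • M₁) ∆ M₁) = (h • M₁) ∆ M₁ := by
    intro h g
    rw [Set.smul_set_symmDiff, hsetcomm g h M₁, hinv₁ g]
  -- finite G-invariant sets lie in the union of finite orbits
  set W : Set X := {x : X | (MulAction.orbit G x).Finite} with hWdef
  have hWG : ∀ (g : G) (x : X), x ∈ W ↔ g • x ∈ W := by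
    intro g x
    simp only [hWdef, Set.mem_setOf_eq, MulAction.orbit_smul]
  have hWsmulG : ∀ g : G, g • W = W := by
    intro g
    ext x
    rw [Set.mem_smul_set_iff_inv_smul_mem, ← hWG g⁻¹ x]
  have horbH : ∀ (h : H) (x : X), MulAction.orbit G (h • x) = (h • ·) '' MulAction.orbit G x := by
    intro h x
    ext z
    constructor
    · rintro ⟨g, rfl⟩
      exact ⟨g • x, ⟨g, rfl⟩, (hcommute g h x).symm⟩
    · rintro ⟨y, ⟨g, rfl⟩, rfl⟩
      exact ⟨g, hcommute g h x⟩
  have hWH : ∀ (h : H) (x : X), x ∈ W ↔ h • x ∈ W := by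
    intro h x
    simp only [hWdef, Set.mem_setOf_eq]
    rw [horbH h x]
    constructor
    · exact fun hf => hf.image _
    · intro hf
      have : Function.Injective (h • · : X → X) := MulAction.injective h
      exact Set.Finite.of_finite_image hf this.injOn
  have hWsmulH : ∀ h : H, h • W = W := by
    intro h
    ext x
    rw [Set.mem_smul_set_iff_inv_smul_mem, ← hWH h⁻¹ x]
  have hfinsubW : ∀ F : Set X, F.Finite → (∀ g : G, g • F = F) → F ⊆ W := by
    intro F hF hinvF x hx
    refine Set.Finite.subset hF fun z hz => ?_
    obtain ⟨g, rfl⟩ := hz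
    rw [← hinvF g]
    exact Set.smul_mem_smul_set hx
  -- quotient by G-orbits
  set Y := Quotient (MulAction.orbitRel G X) with hYdef
  set q : X → Y := Quotient.mk (MulAction.orbitRel G X) with hqdef
  have hq_eq : ∀ x x' : X, q x = q x' ↔ x ∈ MulAction.orbit G x' := by
    intro x x'
    rw [hqdef, Quotient.eq]
    exact MulAction.orbitRel_apply
  have hq_surj : Function.Surjective q := Quotient.mk_surjective
  letI instY : MulAction H Y :=
    { smul := fun h y => Quotient.map' (fun x => h • x) (by
        intro a b hab
        have hab' : a ∈ MulAction.orbit G b := MulAction.orbitRel_apply.mp hab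
        obtain ⟨g, rfl⟩ := hab'
        refine MulAction.orbitRel_apply.mpr ⟨g, ?_⟩
        show g • (h • b) = h • (g • b)
        exact hcommute g h b) y
      one_smul := fun y => Quotient.inductionOn' y (fun a => by
        show Quotient.mk'' ((1 : H) • a) = Quotient.mk'' a
        rw [one_smul])
      mul_smul := fun h h' y => Quotient.inductionOn' y (fun a => by
        show Quotient.mk'' ((h * h') • a) = Quotient.mk'' (h • (h' • a))
        rw [mul_smul]) }
  have hqH : ∀ (h : H) (x : X), q (h • x) = h • q x := fun h x => rfl
  have hqG : ∀ (g : G) (x : X), q (g • x) = q x := by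
    intro g x
    exact (hq_eq _ _).mpr ⟨g, rfl⟩
  have himg_smul : ∀ (h : H) (A : Set X), h • (q '' A) = q '' (h • A) := by
    intro h A
    have h1 : h • (q '' A) = (h • ·) '' (q '' A) := rfl
    rw [h1, Set.image_image]
    have h2 : (h • (A : Set X)) = (h • ·) '' A := rfl
    rw [h2, Set.image_image]
    apply Set.image_congr
    intro a _
    exact (hqH h a).symm
  have hpre_inv : ∀ A : Set X, (∀ g : G, g • A = A) → q ⁻¹' (q '' A) = A := by
    intro A hinvA
    ext x
    constructor
    · rintro ⟨a, haA, he⟩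
      obtain ⟨g, rfl⟩ := (hq_eq x a).mp he.symm
      rw [← hinvA g]
      exact Set.smul_mem_smul_set haA
    · intro hx
      exact ⟨x, hx, rfl⟩
  have hfiber : ∀ x : X, q ⁻¹' {q x} = MulAction.orbit G x := by
    intro x
    ext z
    simp only [Set.mem_preimage, Set.mem_singleton_iff]
    exact hq_eq z x
  -- M₁ ∩ W is G-invariant
  have hM₁Winv : ∀ g : G, g • (M₁ ∩ W) = M₁ ∩ W := by
    intro g
    rw [Set.smul_set_inter, hinv₁ g, hWsmulG g]
  set Mstar : Set Y := q '' (M₁ ∩ W) with hMstar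
  have hMstarW : Mstar ⊆ q '' W := Set.image_mono Set.inter_subset_right
  -- H commensurates Mstar
  have hMstarcomm : ∀ h : H, ((h • Mstar) ∆ Mstar).Finite := by
    intro h
    have h1 : h • Mstar = q '' ((h • M₁) ∩ W) := by
      rw [hMstar, himg_smul, Set.smul_set_inter, hWsmulH h]
    have h2 : (h • Mstar) ∆ Mstar ⊆ q '' (((h • M₁) ∩ W) ∆ (M₁ ∩ W)) := by
      rw [h1, hMstar]
      intro y hy
      rcases Set.mem_symmDiff.mp hy with ⟨⟨a, ha, rfl⟩, hy2⟩ | ⟨⟨a, ha, rfl⟩, hy2⟩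
      · refine ⟨a, Set.mem_symmDiff.mpr (Or.inl ⟨ha, fun hc => hy2 ⟨a, hc, rfl⟩⟩), rfl⟩
      · refine ⟨a, Set.mem_symmDiff.mpr (Or.inr ⟨ha, fun hc => hy2 ⟨a, hc, rfl⟩⟩), rfl⟩
    have h3 : (((h • M₁) ∩ W) ∆ (M₁ ∩ W)) ⊆ (h • M₁) ∆ M₁ := by
      intro x hx
      rcases Set.mem_symmDiff.mp hx with ⟨⟨h1', h2'⟩, hx2⟩ | ⟨⟨h1', h2'⟩, hx2⟩
      · exact Set.mem_symmDiff.mpr (Or.inl ⟨h1', fun hc => hx2 ⟨hc, h2'⟩⟩)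
      · exact Set.mem_symmDiff.mpr (Or.inr ⟨h1', fun hc => hx2 ⟨hc, h2'⟩⟩)
    exact (((hMH h).subset h3).image q).subset h2
  obtain ⟨P', hinvP', hfinP'⟩ := hH Y Mstar hMstarcomm
  have hqWinv : ∀ h : H, h • (q '' W) = q '' W := by
    intro h
    rw [himg_smul, hWsmulH h]
  set P : Set Y := P' ∩ q '' W with hPdef
  have hinvP : ∀ h : H, h • P = P := by
    intro h
    rw [hPdef, Set.smul_set_inter, hinvP' h, hqWinv h]
  have hfinP : (Mstar ∆ P).Finite := by
    refine hfinP'.subset ?_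
    intro y hy
    rcases Set.mem_symmDiff.mp hy with ⟨hy1, hy2⟩ | ⟨hy1, hy2⟩
    · exact Set.mem_symmDiff.mpr (Or.inl ⟨hy1, fun hc => hy2 ⟨hc, hMstarW hy1⟩⟩)
    · exact Set.mem_symmDiff.mpr (Or.inr ⟨hy1.1, hy2⟩)
  have hPsubW : P ⊆ q '' W := Set.inter_subset_right
  -- pull back
  have hprefin : (q ⁻¹' (Mstar ∆ P)).Finite := by
    have hsubW : Mstar ∆ P ⊆ q '' W := by
      intro y hy
      rcases Set.mem_symmDiff.mp hy with ⟨hy1, -⟩ | ⟨hy1, -⟩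
      · exact hMstarW hy1
      · exact hPsubW hy1
    have hcover : q ⁻¹' (Mstar ∆ P) = ⋃ y ∈ Mstar ∆ P, q ⁻¹' {y} := by
      ext x
      simp only [Set.mem_preimage, Set.mem_iUnion, Set.mem_singleton_iff, exists_prop]
      exact ⟨fun hx => ⟨q x, hx, rfl⟩, fun ⟨y, hy, he⟩ => he ▸ hy⟩
    rw [hcover]
    refine Set.Finite.biUnion hfinP fun y hy => ?_
    obtain ⟨w, hwW, rfl⟩ := hsubW hy
    rw [hfiber w]
    exact hwW
  have hpreMstar : q ⁻¹' Mstar = M₁ ∩ W := hpre_inv _ hM₁Winv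
  have hpreP_subW : q ⁻¹' P ⊆ W := by
    intro x hx
    obtain ⟨w, hwW, he⟩ := hPsubW hx
    obtain ⟨g, rfl⟩ := (hq_eq x w).mp he.symm
    exact (hWG g w).mp hwW
  set M' : Set X := q ⁻¹' P ∪ (M₁ \ W) with hM'def
  -- G-invariance
  have hM'G : ∀ g : G, g • M' = M' := by
    intro g
    have h1 : g • (q ⁻¹' P) = q ⁻¹' P := by
      ext x
      rw [Set.mem_smul_set_iff_inv_smul_mem, Set.mem_preimage, Set.mem_preimage, hqG g⁻¹ x]
    rw [hM'def, Set.smul_set_union, h1, Set.smul_set_sdiff, hinv₁ g, hWsmulG g]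
  -- H-invariance
  have hM'H : ∀ h : H, h • M' = M' := by
    intro h
    have h1 : h • (q ⁻¹' P) = q ⁻¹' P := by
      ext x
      rw [Set.mem_smul_set_iff_inv_smul_mem, Set.mem_preimage, Set.mem_preimage, hqH h⁻¹ x,
        ← Set.mem_smul_set_iff_inv_smul_mem, hinvP h]
    have h2 : (h • M₁) \ W = M₁ \ W := by
      have hdiffW : (h • M₁) ∆ M₁ ⊆ W := hfinsubW _ (hMH h) (hGinvdiff h)
      ext x
      constructor
      · rintro ⟨hx1, hx2⟩
        refine ⟨?_, hx2⟩
        by_contra hc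
        exact hx2 (hdiffW (Set.mem_symmDiff.mpr (Or.inl ⟨hx1, hc⟩)))
      · rintro ⟨hx1, hx2⟩
        refine ⟨?_, hx2⟩
        by_contra hc
        exact hx2 (hdiffW (Set.mem_symmDiff.mpr (Or.inr ⟨hx1, hc⟩)))
    rw [hM'def, Set.smul_set_union, h1, Set.smul_set_sdiff, hWsmulH h, h2]
  -- full invariance
  have hM'P : ∀ p : G × H, p • M' = M' := by
    intro p
    have hp : p = (p.1, (1:H)) * ((1:G), p.2) := by ext <;> simp
    rw [hp, mul_smul, ← hsetH, ← hsetG, hM'H, hM'G]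
  -- finiteness
  have hM₁M' : M₁ ∆ M' ⊆ q ⁻¹' (Mstar ∆ P) := by
    intro x hx
    rcases Set.mem_symmDiff.mp hx with ⟨hx1, hx2⟩ | ⟨hx1, hx2⟩
    · by_cases hxW : x ∈ W
      · have hqx : q x ∈ Mstar := ⟨x, ⟨hx1, hxW⟩, rfl⟩
        have hqxP : q x ∉ P := fun hc => hx2 (Or.inl hc)
        exact Set.mem_symmDiff.mpr (Or.inl ⟨hqx, hqxP⟩)
      · exact absurd (Or.inr ⟨hx1, hxW⟩) hx2
    · rcases hx1 with hx1 | hx1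
      · have hqx : q x ∉ Mstar := by
          intro hc
          have : x ∈ M₁ ∩ W := by rw [← hpreMstar]; exact hc
          exact hx2 this.1
        exact Set.mem_symmDiff.mpr (Or.inr ⟨hx1, hqx⟩)
      · exact absurd hx1.1 hx2
  have hfinal : (M ∆ M').Finite := by
    refine Set.Finite.subset (Set.Finite.union hfin₁ (hprefin.subset hM₁M')) ?_
    exact (symmDiff_triangle M M₁ M').trans (le_refl _)
  exact ⟨M', hM'P, hfinal⟩
end Product

/-- For finitely generated groups, `G × H` has property FW iff both `G` and `H` do. -/
theorem stmt16 {G H : Type*} [Group G] [Group H] (hG : Group.FG G) (hH : Group.FG H) :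
    HasFW (G × H) ↔ HasFW G ∧ HasFW H := by
  have hGH : Group.FG (G × H) := by
    obtain ⟨SG, hSG, hSGf⟩ := Group.fg_iff.mp hG
    obtain ⟨SH, hSH, hSHf⟩ := Group.fg_iff.mp hH
    refine Group.fg_iff.mpr ⟨(MonoidHom.inl G H) '' SG ∪ (MonoidHom.inr G H) '' SH, ?_,
      (hSGf.image _).union (hSHf.image _)⟩
    rw [eq_top_iff]
    rintro ⟨g, h⟩ -
    have hg : ((g, 1) : G × H) ∈ Subgroup.closure ((MonoidHom.inl G H) '' SG) := by
      rw [← MonoidHom.map_closure]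
      exact Subgroup.mem_map_of_mem _ (by rw [hSG]; trivial)
    have hh : ((1, h) : G × H) ∈ Subgroup.closure ((MonoidHom.inr G H) '' SH) := by
      rw [← MonoidHom.map_closure]
      exact Subgroup.mem_map_of_mem _ (by rw [hSH]; trivial)
    have he : ((g, h) : G × H) = (g, 1) * (1, h) := by ext <;> simp
    rw [he]
    exact mul_mem (Subgroup.closure_mono Set.subset_union_left hg)
      (Subgroup.closure_mono Set.subset_union_right hh)
  constructor
  · intro h
    exact ⟨hasFW_of_commFW (commFW_fst (commFW_of_hasFW hGH h)),
      hasFW_of_commFW (commFW_snd (commFW_of_hasFW hGH h))⟩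
  · rintro ⟨h1, h2⟩
    exact hasFW_of_commFW (commFW_prod (commFW_of_hasFW hG h1) (commFW_of_hasFW hH h2))
end
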